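/- arXiv:1801.00771 — 9 statements merged into one kernel-verified Lean document; each statement's English description precedes it below -/
import Mathlib

section
/- For every integer i ≥ 1, the p-adic absolute value of i! satisfies ω^i ≤ |i!|_p ≤ i·ω^{i-(p-1)}, where ω = p^{-1/(p-1)}. -/
/-- For every integer `i ≥ 1` and prime `p`, with `ω = p^(-1/(p-1))`,
the `p`-adic absolute value of `i!` satisfies `ω^i ≤ |i!|_p ≤ i·ω^(i-(p-1))`. -/
theorem padicNorm_factorial_bounds (p : ℕ) (hp : p.Prime) (i : ℕ) (hi : 1 ≤ i) :
    let ω : ℝ := (p : ℝ) ^ (-(1 : ℝ) / (p - 1))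
    ω ^ i ≤ (padicNorm p (Nat.factorial i) : ℝ) ∧
    (padicNorm p (Nat.factorial i) : ℝ) ≤ (i : ℝ) * ω ^ ((i : ℝ) - (p - 1)) := by
  intro ω
  haveI : Fact p.Prime := ⟨hp⟩
  have hp1 : (1 : ℝ) < p := by exact_mod_cast hp.one_lt
  have hp0 : (0 : ℝ) < p := lt_trans one_pos hp1
  have hP : (0 : ℝ) < (p : ℝ) - 1 := by linarith
  set v : ℕ := padicValNat p (Nat.factorial i) with hv
  set s : ℕ := (p.digits i).sum with hs
  set d : ℕ := (p.digits i).length with hd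
  have hi0 : i ≠ 0 := Nat.one_le_iff_ne_zero.mp hi
  -- Legendre
  have hleg : (p - 1) * v = i - s := sub_one_mul_padicValNat_factorial i
  have hsi : s ≤ i := Nat.digit_sum_le p i
  have hlegR : ((p : ℝ) - 1) * v = (i : ℝ) - s := by
    have := congrArg (fun n : ℕ => (n : ℝ)) hleg
    push_cast [Nat.cast_sub hsi, Nat.cast_sub hp.one_le] at this
    linarith [this]
  -- the norm as a real rpow
  have hnorm : (padicNorm p (Nat.factorial i) : ℝ) = (p : ℝ) ^ (-(v : ℝ)) := by
    have hne : ((Nat.factorial i : ℚ)) ≠ 0 := by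
      exact_mod_cast i.factorial_ne_zero
    rw [padicNorm.eq_zpow_of_nonzero hne]
    have : padicValRat p (Nat.factorial i : ℚ) = (v : ℤ) := by
      simp [padicValRat.of_nat, hv]
    rw [this]
    push_cast
    rw [← Real.rpow_intCast]
    push_cast
    ring_nf
  have hωpow : ∀ x : ℝ, ω ^ x = (p : ℝ) ^ ((-(1 : ℝ) / (p - 1)) * x) := by
    intro x
    rw [show ω = (p : ℝ) ^ (-(1 : ℝ) / (p - 1)) from rfl, ← Real.rpow_mul hp0.le]
  have hωpown : ω ^ i = (p : ℝ) ^ ((-(1 : ℝ) / (p - 1)) * i) := by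
    rw [← Real.rpow_natCast ω i, hωpow]
  constructor
  · rw [hωpown, hnorm]
    apply Real.rpow_le_rpow_left_iff hp1 |>.mpr
    rw [div_mul_eq_mul_div, div_le_iff₀ hP]
    nlinarith [hlegR, Nat.cast_nonneg (α := ℝ) s]
  · rw [hnorm, hωpow]
    -- digit sum bound: s ≤ d * (p - 1)
    have hsd : (s : ℝ) ≤ (d : ℝ) * ((p : ℝ) - 1) := by
      have : s ≤ d * (p - 1) := by
        calc s ≤ d • (p - 1) := List.sum_le_card_nsmul _ _ (fun x hx =>
                Nat.le_sub_one_of_lt (Nat.digits_lt_base hp.one_lt hx))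
        _ = d * (p - 1) := by rw [smul_eq_mul]
      calc (s : ℝ) ≤ ((d * (p - 1) : ℕ) : ℝ) := by exact_mod_cast this
        _ = (d : ℝ) * ((p : ℝ) - 1) := by
            push_cast [Nat.cast_sub hp.one_le]; ring
    -- p ^ d ≤ p * i
    have hpd : ((p : ℝ)) ^ (d : ℝ) ≤ (p : ℝ) * i := by
      have : p ^ d ≤ p * i := Nat.base_pow_length_digits_le p i hp.one_lt hi0
      rw [Real.rpow_natCast]
      exact_mod_cast this
    -- key: p ^ ((s - (p-1))/(p-1)) ≤ i
    have key : (p : ℝ) ^ (((s : ℝ) - ((p : ℝ) - 1)) / ((p : ℝ) - 1)) ≤ (i : ℝ) := by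
      have h1 : (p : ℝ) ^ (((s : ℝ) - ((p : ℝ) - 1)) / ((p : ℝ) - 1)) ≤
          (p : ℝ) ^ ((d : ℝ) - 1) := by
        apply Real.rpow_le_rpow_left_iff hp1 |>.mpr
        rw [div_le_iff₀ hP]
        nlinarith [hsd]
      have h2 : (p : ℝ) ^ ((d : ℝ) - 1) ≤ (i : ℝ) := by
        rw [Real.rpow_sub hp0, Real.rpow_one, div_le_iff₀ hp0]
        linarith [hpd]
      linarith
    -- decompose the exponent
    have hexp : -(v : ℝ) = ((s : ℝ) - ((p : ℝ) - 1)) / ((p : ℝ) - 1) +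
        (-(1 : ℝ) / ((p : ℝ) - 1)) * ((i : ℝ) - ((p : ℝ) - 1)) := by
      field_simp
      linarith [hlegR]
    rw [hexp, Real.rpow_add hp0]
    exact mul_le_mul_of_nonneg_right key (Real.rpow_nonneg hp0.le _)
end

section
/- Let p be an odd prime. The formal power series c = ∑_{i≥0} ((-1)^i/(2i+1)!!)·t^{2i+1} over ℚ_p has p-adic radius of convergence exactly ω^{1/2}, where ω = p^{-1/(p-1)}. -/
open Filter

private lemma prod_odd_mul_eq (i : ℕ) :
    (∏ j ∈ Finset.range (i + 1), (2 * j + 1)) * (2 ^ i * Nat.factorial i) =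
      Nat.factorial (2 * i + 1) := by
  induction i with
  | zero => simp
  | succ n ih =>
    have h3 : Nat.factorial (2 * (n + 1) + 1) =
        (2 * n + 3) * ((2 * n + 2) * Nat.factorial (2 * n + 1)) := by
      rw [show 2 * (n + 1) + 1 = (2 * n + 2) + 1 from by ring, Nat.factorial_succ,
        show 2 * n + 2 = (2 * n + 1) + 1 from by ring, Nat.factorial_succ]
    rw [Finset.prod_range_succ, h3, ← ih, pow_succ, Nat.factorial_succ]
    ring

private lemma digitsum_pos {p n : ℕ} (hn : n ≠ 0) : 1 ≤ (p.digits n).sum := by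
  have hne : p.digits n ≠ [] := Nat.digits_ne_nil_iff_ne_zero.mpr hn
  have hmem := List.getLast_mem hne
  have hlast := Nat.getLast_digit_ne_zero p hn
  have : (p.digits n).getLast hne ≤ (p.digits n).sum :=
    List.single_le_sum (fun _ _ => Nat.zero_le _) _ hmem
  omega

private lemma digitsum_le {p : ℕ} (hp : 1 < p) (n : ℕ) :
    (p.digits n).sum ≤ (p - 1) * (Nat.log p n + 1) := by
  rcases eq_or_ne n 0 with rfl | hn
  · simp
  · have hlen : (p.digits n).length = Nat.log p n + 1 := Nat.digits_len p n hp hn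
    have hle : (p.digits n).sum ≤ (p.digits n).length * (p - 1) := by
      have := List.sum_le_card_nsmul (p.digits n) (p - 1)
        (fun x hx => by have := Nat.digits_lt_base hp hx; omega)
      simpa [smul_eq_mul] using this
    rw [hlen] at hle
    exact le_of_le_of_eq hle (mul_comm _ _)

private lemma val_bounds {p : ℕ} (hp : p.Prime) (hp2 : p ≠ 2) (i : ℕ) :
    (p - 1) * padicValNat p (∏ j ∈ Finset.range (i + 1), (2 * j + 1)) ≤
        i + (p - 1) * (Nat.log p i + 1) ∧
      i + 1 ≤ (p - 1) * padicValNat p (∏ j ∈ Finset.range (i + 1), (2 * j + 1)) +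
        (p - 1) * (Nat.log p (2 * i + 1) + 1) := by
  haveI : Fact p.Prime := ⟨hp⟩
  set D := ∏ j ∈ Finset.range (i + 1), (2 * j + 1) with hD
  have hDpos : 0 < D := Finset.prod_pos fun j _ => by omega
  have hDne : D ≠ 0 := hDpos.ne'
  have hfne : Nat.factorial i ≠ 0 := Nat.factorial_ne_zero i
  have h2ne : (2 : ℕ) ^ i ≠ 0 := by positivity
  have hnd2 : ¬ p ∣ 2 ^ i := by
    intro hdvd
    exact hp2 ((Nat.prime_dvd_prime_iff_eq hp Nat.prime_two).mp (hp.dvd_of_dvd_pow hdvd))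
  have hkey : padicValNat p D + padicValNat p (Nat.factorial i) =
      padicValNat p (Nat.factorial (2 * i + 1)) := by
    have := prod_odd_mul_eq i
    calc padicValNat p D + padicValNat p (Nat.factorial i)
        = padicValNat p D + (padicValNat p (2 ^ i) + padicValNat p (Nat.factorial i)) := by
          rw [padicValNat.eq_zero_of_not_dvd hnd2]; ring
      _ = padicValNat p (D * (2 ^ i * Nat.factorial i)) := by
          rw [padicValNat.mul hDne (mul_ne_zero h2ne hfne), padicValNat.mul h2ne hfne]
      _ = padicValNat p (Nat.factorial (2 * i + 1)) := by rw [this]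
  have hC : (p - 1) * padicValNat p (Nat.factorial (2 * i + 1)) =
      (2 * i + 1) - (p.digits (2 * i + 1)).sum := sub_one_mul_padicValNat_factorial _
  have hB : (p - 1) * padicValNat p (Nat.factorial i) = i - (p.digits i).sum :=
    sub_one_mul_padicValNat_factorial _
  have hAB : (p - 1) * padicValNat p D + (p - 1) * padicValNat p (Nat.factorial i) =
      (p - 1) * padicValNat p (Nat.factorial (2 * i + 1)) := by
    rw [← Nat.mul_add, hkey]
  have hs2le : (p.digits (2 * i + 1)).sum ≤ 2 * i + 1 := Nat.digit_sum_le p _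
  have hs1le : (p.digits i).sum ≤ i := Nat.digit_sum_le p i
  have hs2pos : 1 ≤ (p.digits (2 * i + 1)).sum := digitsum_pos (by omega)
  have hs1M : (p.digits i).sum ≤ (p - 1) * (Nat.log p i + 1) := digitsum_le hp.one_lt i
  have hs2M : (p.digits (2 * i + 1)).sum ≤ (p - 1) * (Nat.log p (2 * i + 1) + 1) :=
    digitsum_le hp.one_lt _
  omega

private lemma norm_a_eq {p : ℕ} (hp : p.Prime) (i : ℕ) :
    padicNorm p ((-1) ^ i / ((∏ j ∈ Finset.range (i + 1), (2 * j + 1) : ℕ) : ℚ)) =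
      (p : ℚ) ^ padicValNat p (∏ j ∈ Finset.range (i + 1), (2 * j + 1)) := by
  haveI : Fact p.Prime := ⟨hp⟩
  set D := ∏ j ∈ Finset.range (i + 1), (2 * j + 1) with hD
  have hDpos : 0 < D := Finset.prod_pos fun j _ => by omega
  have hDne : (D : ℚ) ≠ 0 := by exact_mod_cast hDpos.ne'
  have h1 : padicNorm p ((-1 : ℚ) ^ i) = 1 := by
    rcases Nat.even_or_odd i with h | h
    · rw [h.neg_one_pow]; exact padicNorm.one
    · rw [h.neg_one_pow, padicNorm.neg]; exact padicNorm.one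
  rw [padicNorm.div, h1]
  have h2 : padicNorm p (D : ℚ) = (p : ℚ) ^ (-(padicValNat p D : ℤ)) := by
    rw [padicNorm.eq_zpow_of_nonzero hDne]
    congr 1
    rw [← padicValRat.of_nat]
  rw [h2]
  rw [zpow_neg, one_div, inv_inv, zpow_natCast]

/-- For an odd prime `p`, the power series
`c = ∑ ((-1)^i/(2i+1)!!) t^(2i+1)` over `ℚ_p`, where `(2i+1)!! = ∏_{j=0}^{i} (2j+1)`,
has radius of convergence exactly `ω^(1/2)` where `ω = p^(-1/(p-1))`. -/
theorem radius_of_c_series (p : ℕ) (hp : p.Prime) (hp2 : p ≠ 2) :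
    let ω : ℝ := (p : ℝ) ^ (-(1 : ℝ) / (p - 1))
    let a : ℕ → ℚ := fun i => (-1) ^ i / (∏ j ∈ Finset.range (i + 1), (2 * j + 1) : ℕ)
    (∀ ρ : ℝ, 0 ≤ ρ → ρ < ω ^ ((1 : ℝ) / 2) →
      Tendsto (fun i : ℕ => (padicNorm p (a i) : ℝ) * ρ ^ (2 * i + 1)) atTop (nhds 0)) ∧
    (∀ ρ : ℝ, ω ^ ((1 : ℝ) / 2) < ρ →
      ¬ Tendsto (fun i : ℕ => (padicNorm p (a i) : ℝ) * ρ ^ (2 * i + 1)) atTop (nhds 0)) := by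
  intro ω a
  haveI : Fact p.Prime := ⟨hp⟩
  have hp1 : (1 : ℝ) < p := by exact_mod_cast hp.one_lt
  have hp0 : (0 : ℝ) < p := lt_trans one_pos hp1
  have hp2R : (2 : ℝ) ≤ p := by exact_mod_cast hp.two_le
  have hpm : (0 : ℝ) < (p : ℝ) - 1 := by linarith
  have hωpos : (0 : ℝ) < ω := Real.rpow_pos_of_pos hp0 _
  have hhalfpos : (0 : ℝ) < ω ^ ((1 : ℝ) / 2) := Real.rpow_pos_of_pos hωpos _
  have hsq : (ω ^ ((1 : ℝ) / 2)) ^ 2 = ω := by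
    rw [← Real.rpow_natCast (ω ^ ((1 : ℝ) / 2)) 2, ← Real.rpow_mul hωpos.le]
    norm_num
  have hmulone : (p : ℝ) ^ ((1 : ℝ) / ((p : ℝ) - 1)) * ω = 1 := by
    show _ * (p : ℝ) ^ (-(1 : ℝ) / ((p : ℝ) - 1)) = 1
    rw [← Real.rpow_add hp0]
    have : (1 : ℝ) / ((p : ℝ) - 1) + -1 / ((p : ℝ) - 1) = 0 := by ring
    rw [this, Real.rpow_zero]
  have hbpos : (0 : ℝ) < (p : ℝ) ^ ((1 : ℝ) / ((p : ℝ) - 1)) := Real.rpow_pos_of_pos hp0 _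
  -- norm computation in ℝ
  have hnorm : ∀ i : ℕ, (padicNorm p (a i) : ℝ) =
      (p : ℝ) ^ padicValNat p (∏ j ∈ Finset.range (i + 1), (2 * j + 1)) := by
    intro i
    have := norm_a_eq hp i
    show ((padicNorm p ((-1) ^ i / ((∏ j ∈ Finset.range (i + 1), (2 * j + 1) : ℕ) : ℚ))) : ℝ) = _
    rw [this]
    push_cast
    try ring
  -- rpow expansion of p^v against bounds
  have hrpow_pow : ∀ (ρ : ℝ) (i : ℕ), 0 ≤ ρ →
      (p : ℝ) ^ (((i : ℝ)) / ((p : ℝ) - 1)) * ρ ^ (2 * i) =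
        ((p : ℝ) ^ ((1 : ℝ) / ((p : ℝ) - 1)) * ρ ^ 2) ^ i := by
    intro ρ i hρ
    rw [mul_pow, ← pow_mul, ← Real.rpow_natCast ((p : ℝ) ^ ((1 : ℝ) / ((p : ℝ) - 1))) i,
      ← Real.rpow_mul hp0.le,
      show (1 : ℝ) / ((p : ℝ) - 1) * ((i : ℕ) : ℝ) = (i : ℝ) / ((p : ℝ) - 1) from by
        push_cast; ring]
  constructor
  · -- convergence
    intro ρ hρ0 hρ
    set r : ℝ := (p : ℝ) ^ ((1 : ℝ) / ((p : ℝ) - 1)) * ρ ^ 2 with hr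
    have hρ2 : ρ ^ 2 < ω := by
      calc ρ ^ 2 < (ω ^ ((1 : ℝ) / 2)) ^ 2 := by
            apply pow_lt_pow_left₀ hρ hρ0
            norm_num
        _ = ω := hsq
    have hr1 : r < 1 := by
      calc r < (p : ℝ) ^ ((1 : ℝ) / ((p : ℝ) - 1)) * ω :=
            mul_lt_mul_of_pos_left hρ2 hbpos
        _ = 1 := hmulone
    have hr0 : (0 : ℝ) ≤ r := by positivity
    have key : ∀ i : ℕ, 1 ≤ i →
        (padicNorm p (a i) : ℝ) * ρ ^ (2 * i + 1) ≤ (i : ℝ) * r ^ i * ((p : ℝ) * ρ) := by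
      intro i hi
      rw [hnorm i]
      set v := padicValNat p (∏ j ∈ Finset.range (i + 1), (2 * j + 1)) with hv
      set L := Nat.log p i with hL
      have hub := (val_bounds hp hp2 i).1
      have hubR : ((p : ℝ) - 1) * v ≤ i + ((p : ℝ) - 1) * (L + 1) := by
        have h1 : ((p - 1 : ℕ) : ℝ) = (p : ℝ) - 1 := by
          push_cast [Nat.cast_sub hp.one_le]; ring
        calc ((p : ℝ) - 1) * v = (((p - 1) * v : ℕ) : ℝ) := by push_cast [h1]; ring
          _ ≤ ((i + (p - 1) * (L + 1) : ℕ) : ℝ) := by exact_mod_cast hub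
          _ = i + ((p : ℝ) - 1) * (L + 1) := by push_cast [h1]; ring
      have hvle : (v : ℝ) ≤ (i : ℝ) / ((p : ℝ) - 1) + ((L : ℝ) + 1) := by
        rw [← sub_nonneg]
        have h2 : (i : ℝ) / ((p : ℝ) - 1) + ((L : ℝ) + 1) - v =
            ((i + ((p : ℝ) - 1) * (L + 1)) - ((p : ℝ) - 1) * v) / ((p : ℝ) - 1) := by
          field_simp
        rw [h2]
        apply div_nonneg _ hpm.le
        linarith
      have hmono : (p : ℝ) ^ v ≤
          (p : ℝ) ^ ((i : ℝ) / ((p : ℝ) - 1)) * (p : ℝ) ^ ((L : ℝ)) * (p : ℝ) := by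
        have := Real.rpow_le_rpow_of_exponent_le hp1.le hvle
        rw [Real.rpow_natCast] at this
        calc (p : ℝ) ^ v ≤ (p : ℝ) ^ ((i : ℝ) / ((p : ℝ) - 1) + ((L : ℝ) + 1)) := this
          _ = (p : ℝ) ^ ((i : ℝ) / ((p : ℝ) - 1)) * (p : ℝ) ^ ((L : ℝ)) * (p : ℝ) := by
            rw [show (i : ℝ) / ((p : ℝ) - 1) + ((L : ℝ) + 1) =
              ((i : ℝ) / ((p : ℝ) - 1) + (L : ℝ)) + 1 by ring, Real.rpow_add hp0,
              Real.rpow_add hp0, Real.rpow_one]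
      have hlogle : (p : ℝ) ^ ((L : ℝ)) ≤ (i : ℝ) := by
        rw [Real.rpow_natCast]
        exact_mod_cast Nat.pow_log_le_self p (by omega : i ≠ 0)
      have hρpow : (0 : ℝ) ≤ ρ ^ (2 * i + 1) := pow_nonneg hρ0 _
      calc (p : ℝ) ^ v * ρ ^ (2 * i + 1)
          ≤ ((p : ℝ) ^ ((i : ℝ) / ((p : ℝ) - 1)) * (p : ℝ) ^ ((L : ℝ)) * (p : ℝ)) *
              ρ ^ (2 * i + 1) := mul_le_mul_of_nonneg_right hmono hρpow
        _ ≤ ((p : ℝ) ^ ((i : ℝ) / ((p : ℝ) - 1)) * (i : ℝ) * (p : ℝ)) * ρ ^ (2 * i + 1) := by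
            apply mul_le_mul_of_nonneg_right _ hρpow
            apply mul_le_mul_of_nonneg_right _ hp0.le
            exact mul_le_mul_of_nonneg_left hlogle (Real.rpow_pos_of_pos hp0 _).le
        _ = (i : ℝ) * ((p : ℝ) ^ ((i : ℝ) / ((p : ℝ) - 1)) * ρ ^ (2 * i)) * ((p : ℝ) * ρ) := by
            rw [pow_succ]; ring
        _ = (i : ℝ) * r ^ i * ((p : ℝ) * ρ) := by rw [hrpow_pow ρ i hρ0]
    have hg : Tendsto (fun i : ℕ => (i : ℝ) * r ^ i * ((p : ℝ) * ρ)) atTop (nhds 0) := by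
      have habs : |r| < 1 := by rw [abs_of_nonneg hr0]; exact hr1
      have := (tendsto_pow_const_mul_const_pow_of_abs_lt_one 1 habs).mul_const ((p : ℝ) * ρ)
      simpa using this
    apply squeeze_zero' _ _ hg
    · filter_upwards with i
      have : (0 : ℝ) ≤ (padicNorm p (a i) : ℝ) := by
        exact_mod_cast padicNorm.nonneg (a i) (p := p)
      positivity
    · filter_upwards [eventually_ge_atTop 1] with i hi
      exact key i hi
  · -- divergence
    intro ρ hρ h
    have hρ0 : (0 : ℝ) < ρ := lt_trans hhalfpos hρ
    set r : ℝ := (p : ℝ) ^ ((1 : ℝ) / ((p : ℝ) - 1)) * ρ ^ 2 with hr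
    have hρ2 : ω < ρ ^ 2 := by
      calc ω = (ω ^ ((1 : ℝ) / 2)) ^ 2 := hsq.symm
        _ < ρ ^ 2 := by
            apply pow_lt_pow_left₀ hρ hhalfpos.le
            norm_num
    have hr1 : 1 < r := by
      calc (1 : ℝ) = (p : ℝ) ^ ((1 : ℝ) / ((p : ℝ) - 1)) * ω := hmulone.symm
        _ < r := mul_lt_mul_of_pos_left hρ2 hbpos
    have key : ∀ i : ℕ, 1 ≤ i →
        r ^ i * ρ / (((2 * i + 1 : ℕ) : ℝ) * (p : ℝ)) ≤
          (padicNorm p (a i) : ℝ) * ρ ^ (2 * i + 1) := by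
      intro i hi
      rw [hnorm i]
      set v := padicValNat p (∏ j ∈ Finset.range (i + 1), (2 * j + 1)) with hv
      set L := Nat.log p (2 * i + 1) with hL
      have hlb := (val_bounds hp hp2 i).2
      have h1 : ((p - 1 : ℕ) : ℝ) = (p : ℝ) - 1 := by
        push_cast [Nat.cast_sub hp.one_le]; ring
      have hlbR : (i : ℝ) + 1 ≤ ((p : ℝ) - 1) * v + ((p : ℝ) - 1) * (L + 1) := by
        calc (i : ℝ) + 1 = ((i + 1 : ℕ) : ℝ) := by push_cast; ring
          _ ≤ (((p - 1) * v + (p - 1) * (L + 1) : ℕ) : ℝ) := by exact_mod_cast hlb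
          _ = ((p : ℝ) - 1) * v + ((p : ℝ) - 1) * (L + 1) := by push_cast [h1]; ring
      have hvge : (i : ℝ) / ((p : ℝ) - 1) - ((L : ℝ) + 1) ≤ (v : ℝ) := by
        rw [← sub_nonneg]
        have h2 : (v : ℝ) - ((i : ℝ) / ((p : ℝ) - 1) - ((L : ℝ) + 1)) =
            ((((p : ℝ) - 1) * v + ((p : ℝ) - 1) * (L + 1)) - (i : ℝ)) / ((p : ℝ) - 1) := by
          field_simp
          ring
        rw [h2]
        apply div_nonneg _ hpm.le
        linarith
      have hmono : (p : ℝ) ^ ((i : ℝ) / ((p : ℝ) - 1)) / ((p : ℝ) ^ ((L : ℝ)) * (p : ℝ)) ≤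
          (p : ℝ) ^ v := by
        have := Real.rpow_le_rpow_of_exponent_le hp1.le hvge
        rw [Real.rpow_natCast] at this
        calc (p : ℝ) ^ ((i : ℝ) / ((p : ℝ) - 1)) / ((p : ℝ) ^ ((L : ℝ)) * (p : ℝ))
            = (p : ℝ) ^ ((i : ℝ) / ((p : ℝ) - 1) - ((L : ℝ) + 1)) := by
              rw [show (i : ℝ) / ((p : ℝ) - 1) - ((L : ℝ) + 1) =
                ((i : ℝ) / ((p : ℝ) - 1) - (L : ℝ)) - 1 by ring, Real.rpow_sub hp0,
                Real.rpow_sub hp0, Real.rpow_one, div_div]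
          _ ≤ (p : ℝ) ^ v := this
      have hlogle : (p : ℝ) ^ ((L : ℝ)) ≤ ((2 * i + 1 : ℕ) : ℝ) := by
        rw [Real.rpow_natCast]
        exact_mod_cast Nat.pow_log_le_self p (by omega : 2 * i + 1 ≠ 0)
      have hLpos : (0 : ℝ) < (p : ℝ) ^ ((L : ℝ)) := Real.rpow_pos_of_pos hp0 _
      have hdiv : (p : ℝ) ^ ((i : ℝ) / ((p : ℝ) - 1)) / (((2 * i + 1 : ℕ) : ℝ) * (p : ℝ)) ≤
          (p : ℝ) ^ ((i : ℝ) / ((p : ℝ) - 1)) / ((p : ℝ) ^ ((L : ℝ)) * (p : ℝ)) := by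
        apply div_le_div_of_nonneg_left (Real.rpow_pos_of_pos hp0 _).le
          (by positivity)
        exact mul_le_mul_of_nonneg_right hlogle hp0.le
      have hρpow : (0 : ℝ) ≤ ρ ^ (2 * i + 1) := (pow_pos hρ0 _).le
      calc r ^ i * ρ / (((2 * i + 1 : ℕ) : ℝ) * (p : ℝ))
          = ((p : ℝ) ^ ((i : ℝ) / ((p : ℝ) - 1)) / (((2 * i + 1 : ℕ) : ℝ) * (p : ℝ))) *
              ρ ^ (2 * i + 1) := by
            rw [← hrpow_pow ρ i hρ0.le, pow_succ]
            field_simp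
        _ ≤ ((p : ℝ) ^ ((i : ℝ) / ((p : ℝ) - 1)) / ((p : ℝ) ^ ((L : ℝ)) * (p : ℝ))) *
              ρ ^ (2 * i + 1) := mul_le_mul_of_nonneg_right hdiv hρpow
        _ ≤ (p : ℝ) ^ v * ρ ^ (2 * i + 1) := mul_le_mul_of_nonneg_right hmono hρpow
    -- contradiction
    have hev1 : ∀ᶠ i in atTop, (padicNorm p (a i) : ℝ) * ρ ^ (2 * i + 1) < 1 :=
      h.eventually_lt_const one_pos
    have hd : Tendsto (fun i : ℕ => (i : ℝ) ^ 1 / r ^ i) atTop (nhds 0) :=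
      tendsto_pow_const_div_const_pow_of_one_lt 1 hr1
    have hεpos : (0 : ℝ) < ρ / (3 * p) := by positivity
    have hev2 : ∀ᶠ i : ℕ in atTop, (i : ℝ) ^ 1 / r ^ i < ρ / (3 * p) :=
      hd.eventually_lt_const hεpos
    have hev3 : ∀ᶠ i : ℕ in atTop, (1 : ℝ) ≤ (padicNorm p (a i) : ℝ) * ρ ^ (2 * i + 1) := by
      filter_upwards [hev2, eventually_ge_atTop 1] with i h2 hi
      have hrpos : (0 : ℝ) < r ^ i := pow_pos (lt_trans one_pos hr1) i
      rw [pow_one, div_lt_div_iff₀ hrpos (by positivity)] at h2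
      -- h2 : i * (3 * p) < ρ * r ^ i
      have h3 : (((2 * i + 1 : ℕ) : ℝ)) * (p : ℝ) < r ^ i * ρ := by
        have hiR : (1 : ℝ) ≤ (i : ℝ) := by exact_mod_cast hi
        push_cast
        nlinarith [hp0]
      have h4 : (1 : ℝ) ≤ r ^ i * ρ / (((2 * i + 1 : ℕ) : ℝ) * (p : ℝ)) := by
        rw [le_div_iff₀ (by positivity)]
        linarith
      exact le_trans h4 (key i hi)
    obtain ⟨i, h1, h2⟩ := (hev1.and hev3).exists
    linarith
end

section
/- Let p be an odd prime and K a complete discretely valued field of mixed characteristic (0,p). Every nonzero K-linear combination h = d₁·b + d₂·c of b = ∑ ((-1)^i/(2^i i!)) t^{2i} and c = ∑ ((-1)^i/(2i+1)!!) t^{2i+1} has p-adic radius of convergence exactly ω^{1/2} = p^{-1/(2(p-1))}. -/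
open Filter

private lemma doubleFac_eq (i : ℕ) :
    2 ^ i * Nat.factorial i * (∏ j ∈ Finset.range (i + 1), (2 * j + 1)) =
      Nat.factorial (2 * i + 1) := by
  induction i with
  | zero => simp
  | succ n ih =>
    have e2 : Nat.factorial (2 * (n + 1) + 1)
        = (2 * n + 3) * ((2 * n + 2) * Nat.factorial (2 * n + 1)) := by
      have h : 2 * (n + 1) + 1 = (2 * n + 1) + 1 + 1 := by ring
      rw [h, Nat.factorial_succ, Nat.factorial_succ]; try ring
    rw [Finset.prod_range_succ, Nat.factorial_succ, e2, ← ih]; ring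

private lemma legendre_le (p : ℕ) [Fact p.Prime] (i : ℕ) :
    (p - 1) * padicValNat p (Nat.factorial i) ≤ i := by
  rw [sub_one_mul_padicValNat_factorial]; exact Nat.sub_le _ _

private lemma legendre_pow (p : ℕ) [hp : Fact p.Prime] (k : ℕ) :
    (p - 1) * padicValNat p (Nat.factorial (p ^ k)) + 1 = p ^ k := by
  induction k with
  | zero => simp
  | succ k ih =>
    have hsub : p - 1 + 1 = p := Nat.succ_pred_eq_of_pos hp.out.pos
    have h1 : p ^ (k + 1) = p * p ^ k := by ring
    rw [h1, padicValNat_factorial_mul]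
    calc (p - 1) * (padicValNat p (Nat.factorial (p ^ k)) + p ^ k) + 1
        = ((p - 1) * padicValNat p (Nat.factorial (p ^ k)) + 1) + (p - 1) * p ^ k := by ring
      _ = p ^ k + (p - 1) * p ^ k := by rw [ih]
      _ = ((p - 1) + 1) * p ^ k := by ring
      _ = p * p ^ k := by rw [hsub]

private lemma padicNorm_nat_val (p : ℕ) [Fact p.Prime] {m : ℕ} (hm : m ≠ 0) :
    padicNorm p (m : ℚ) = ((p : ℚ) ^ (padicValNat p m))⁻¹ := by
  rw [padicNorm.eq_zpow_of_nonzero (by exact_mod_cast hm), padicValRat.of_nat, zpow_neg,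
    zpow_natCast]

private lemma padicNorm_neg_one_pow (p : ℕ) [Fact p.Prime] (i : ℕ) :
    padicNorm p ((-1 : ℚ) ^ i) = 1 := by
  rcases neg_one_pow_eq_or ℚ i with h | h <;>
    simp [h, padicNorm.one, ← padicNorm.neg (1 : ℚ)]

private lemma padicNorm_unit_div (p : ℕ) [Fact p.Prime] (i : ℕ) {m : ℕ} (hm : m ≠ 0) :
    padicNorm p ((-1) ^ i / (m : ℚ)) = (p : ℚ) ^ (padicValNat p m) := by
  rw [padicNorm.div, padicNorm_neg_one_pow, padicNorm_nat_val p hm, one_div, inv_inv]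

private lemma v2fac (p : ℕ) [hp : Fact p.Prime] (hp2 : p ≠ 2) (i : ℕ) :
    padicValNat p (2 ^ i * Nat.factorial i) = padicValNat p (Nat.factorial i) := by
  have hnot : ¬ p ∣ 2 ^ i := fun h =>
    hp2 ((Nat.prime_dvd_prime_iff_eq hp.out Nat.prime_two).mp (hp.out.dvd_of_dvd_pow h))
  rw [padicValNat.mul (by positivity) (Nat.factorial_ne_zero i),
    padicValNat.eq_zero_of_not_dvd hnot, zero_add]

private lemma vD_facts (p : ℕ) [hp : Fact p.Prime] (hp2 : p ≠ 2) (i : ℕ) :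
    padicValNat p (Nat.factorial i) +
        padicValNat p (∏ j ∈ Finset.range (i + 1), (2 * j + 1)) =
      padicValNat p (Nat.factorial (2 * i + 1)) := by
  have hD : (∏ j ∈ Finset.range (i + 1), (2 * j + 1)) ≠ 0 :=
    Finset.prod_ne_zero_iff.mpr fun j _ => by omega
  have hnot : ¬ p ∣ 2 ^ i := fun h =>
    hp2 ((Nat.prime_dvd_prime_iff_eq hp.out Nat.prime_two).mp (hp.out.dvd_of_dvd_pow h))
  have h1 := congrArg (padicValNat p) (doubleFac_eq i)
  rwa [padicValNat.mul (by positivity) hD,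
    padicValNat.mul (by positivity) (Nat.factorial_ne_zero i),
    padicValNat.eq_zero_of_not_dvd hnot, zero_add] at h1

private lemma vfac_decomp (p : ℕ) [hp : Fact p.Prime] (i : ℕ) :
    padicValNat p (Nat.factorial (2 * i + 1)) =
      padicValNat p (2 * i + 1) + padicValNat p ((2 * i).choose i) +
        2 * padicValNat p (Nat.factorial i) := by
  have hch : (2 * i).choose i ≠ 0 := (Nat.choose_pos (by omega)).ne'
  have h2 : (2 * i).choose i * Nat.factorial i * Nat.factorial i = Nat.factorial (2 * i) := by
    have := Nat.choose_mul_factorial_mul_factorial (show i ≤ 2 * i by omega)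
    rwa [show 2 * i - i = i by omega] at this
  have h2' := congrArg (padicValNat p) h2
  rw [padicValNat.mul (by positivity) (Nat.factorial_ne_zero i),
    padicValNat.mul hch (Nat.factorial_ne_zero i)] at h2'
  have h3 := congrArg (padicValNat p) (Nat.factorial_succ (2 * i)).symm
  rw [padicValNat.mul (by omega) (Nat.factorial_ne_zero (2 * i))] at h3
  omega

/-- Let `p` be an odd prime and `K` a complete discretely valued field of
mixed characteristic `(0,p)` (its norm restricts to the `p`-adic norm on `ℚ`). Every nonzero
`K`-linear combination `h = d₁·b + d₂·c` of `b = ∑ ((-1)^i/(2^i i!)) t^(2i)` and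
`c = ∑ ((-1)^i/(2i+1)!!) t^(2i+1)` has radius of convergence exactly `ω^(1/2)`,
where `ω = p^(-1/(p-1))`. -/
theorem radius_of_combination (p : ℕ) (hp : p.Prime) (hp2 : p ≠ 2)
    (K : Type*) [NormedField K] [CompleteSpace K]
    (hK : ∀ q : ℚ, ‖(q : K)‖ = (padicNorm p q : ℝ))
    (hdisc : ∃ π : K, 0 < ‖π‖ ∧ ‖π‖ < 1 ∧ ∀ x : K, x ≠ 0 → ∃ n : ℤ, ‖x‖ = ‖π‖ ^ n)
    (d₁ d₂ : K) (hd : ¬(d₁ = 0 ∧ d₂ = 0)) :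
    let ω : ℝ := (p : ℝ) ^ (-(1 : ℝ) / (p - 1))
    let bcoef : ℕ → ℚ := fun n =>
      if n % 2 = 0 then (-1) ^ (n / 2) / (2 ^ (n / 2) * Nat.factorial (n / 2)) else 0
    let ccoef : ℕ → ℚ := fun n =>
      if n % 2 = 1 then (-1) ^ (n / 2) / (∏ j ∈ Finset.range (n / 2 + 1), (2 * j + 1) : ℕ)
      else 0
    let a : ℕ → K := fun n => d₁ * (bcoef n : K) + d₂ * (ccoef n : K)
    (∀ ρ : ℝ, 0 ≤ ρ → ρ < ω ^ ((1 : ℝ) / 2) →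
      Tendsto (fun n : ℕ => ‖a n‖ * ρ ^ n) atTop (nhds 0)) ∧
    (∀ ρ : ℝ, ω ^ ((1 : ℝ) / 2) < ρ →
      ¬ Tendsto (fun n : ℕ => ‖a n‖ * ρ ^ n) atTop (nhds 0)) := by
  intro ω bcoef ccoef a
  haveI : Fact p.Prime := ⟨hp⟩
  clear hdisc
  have hω' : ω = (p : ℝ) ^ (-(1 : ℝ) / ((p : ℝ) - 1)) := rfl
  have ha : ∀ n, a n = d₁ * (bcoef n : K) + d₂ * (ccoef n : K) := fun n => rfl
  have hp1 : 1 < p := hp.one_lt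
  have hq1 : (1 : ℝ) < (p : ℝ) := by exact_mod_cast hp1
  have hq0 : (0 : ℝ) < (p : ℝ) := lt_trans one_pos hq1
  have hq1' : (0 : ℝ) < (p : ℝ) - 1 := by linarith
  set r : ℝ := (p : ℝ) ^ ((1 : ℝ) / (2 * ((p : ℝ) - 1))) with hrdef
  have hr0 : 0 < r := Real.rpow_pos_of_pos hq0 _
  have hr1 : 1 < r :=
    (Real.one_lt_rpow_iff_of_pos hq0).mpr (Or.inl ⟨hq1, by positivity⟩)
  have hω : ω ^ ((1 : ℝ) / 2) = r⁻¹ := by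
    rw [hω', ← Real.rpow_mul hq0.le, hrdef, ← Real.rpow_neg hq0.le]
    congr 1
    field_simp
  have hrpow : ∀ m : ℕ, r ^ m = (p : ℝ) ^ ((m : ℝ) / (2 * ((p : ℝ) - 1))) := by
    intro m
    rw [hrdef, ← Real.rpow_natCast ((p : ℝ) ^ ((1:ℝ) / (2 * ((p:ℝ) - 1)))) m,
      ← Real.rpow_mul hq0.le]
    congr 1
    ring
  have qpow_le : ∀ v i : ℕ, (p - 1) * v ≤ i → (p : ℝ) ^ v ≤ r ^ (2 * i) := by
    intro v i h
    have hcast : (((p - 1) * v : ℕ) : ℝ) ≤ (i : ℝ) := by exact_mod_cast h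
    rw [Nat.cast_mul, Nat.cast_sub hp.one_lt.le, Nat.cast_one] at hcast
    rw [hrpow, ← Real.rpow_natCast (p : ℝ) v, Real.rpow_le_rpow_left_iff hq1,
      le_div_iff₀ (by positivity)]
    push_cast
    nlinarith
  have qpow_ge : ∀ v i : ℕ, i ≤ (p - 1) * v → r ^ (2 * i) ≤ (p : ℝ) ^ v := by
    intro v i h
    have hcast : (i : ℝ) ≤ (((p - 1) * v : ℕ) : ℝ) := by exact_mod_cast h
    rw [Nat.cast_mul, Nat.cast_sub hp.one_lt.le, Nat.cast_one] at hcast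
    rw [hrpow, ← Real.rpow_natCast (p : ℝ) v, Real.rpow_le_rpow_left_iff hq1,
      div_le_iff₀ (by positivity)]
    push_cast
    nlinarith
  have key_even : ∀ i : ℕ, ‖a (2 * i)‖ = ‖d₁‖ * (p : ℝ) ^ (padicValNat p (Nat.factorial i)) := by
    intro i
    have hmod : 2 * i % 2 = 0 := by omega
    have hdiv : 2 * i / 2 = i := by omega
    have hb : bcoef (2 * i) = (-1) ^ i / ((2 ^ i * Nat.factorial i : ℕ) : ℚ) := by
      simp only [bcoef, hmod, hdiv, if_true]
      push_cast
      norm_num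
    have hc : ccoef (2 * i) = 0 := by
      simp only [ccoef, hmod]
      norm_num
    rw [ha, hc, Rat.cast_zero, mul_zero, add_zero, norm_mul, hK, hb,
      padicNorm_unit_div p i (by positivity), v2fac p hp2 i]
    push_cast
    ring
  have key_odd : ∀ i : ℕ, ‖a (2 * i + 1)‖ =
      ‖d₂‖ * (p : ℝ) ^ (padicValNat p (∏ j ∈ Finset.range (i + 1), (2 * j + 1))) := by
    intro i
    have hmod : (2 * i + 1) % 2 = 1 := by omega
    have hdiv : (2 * i + 1) / 2 = i := by omega
    have hDne : (∏ j ∈ Finset.range (i + 1), (2 * j + 1)) ≠ 0 :=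
      Finset.prod_ne_zero_iff.mpr fun j _ => by omega
    have hc : ccoef (2 * i + 1) = (-1) ^ i /
        ((∏ j ∈ Finset.range (i + 1), (2 * j + 1) : ℕ) : ℚ) := by
      simp only [ccoef, hmod, hdiv, if_true]
    have hb : bcoef (2 * i + 1) = 0 := by
      simp only [bcoef, hmod]
      norm_num
    rw [ha, hb, Rat.cast_zero, mul_zero, zero_add, norm_mul, hK, hc,
      padicNorm_unit_div p i hDne]
    push_cast
    ring
  set C : ℝ := max ‖d₁‖ ‖d₂‖ with hCdef
  have hC0 : (0 : ℝ) ≤ C := le_trans (norm_nonneg d₁) (le_max_left _ _)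
  have upper : ∀ n : ℕ, 1 ≤ n → ‖a n‖ ≤ C * (n : ℝ) ^ 2 * r ^ n := by
    intro n hn
    have hn2 : (1 : ℝ) ≤ (n : ℝ) ^ 2 := by
      have h1 : (1 : ℝ) ≤ (n : ℝ) := by exact_mod_cast hn
      nlinarith
    rcases Nat.even_or_odd n with ⟨i, hi⟩ | ⟨i, hi⟩
    · have hn' : n = 2 * i := by omega
      subst hn'
      rw [key_even i]
      have h1 : (p : ℝ) ^ (padicValNat p (Nat.factorial i)) ≤ r ^ (2 * i) :=
        qpow_le _ _ (legendre_le p i)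
      calc ‖d₁‖ * (p : ℝ) ^ (padicValNat p (Nat.factorial i))
          ≤ C * r ^ (2 * i) := mul_le_mul (le_max_left _ _) h1 (by positivity) hC0
        _ = C * 1 * r ^ (2 * i) := by ring
        _ ≤ C * ((2 * i : ℕ) : ℝ) ^ 2 * r ^ (2 * i) := by gcongr
    · have hn' : n = 2 * i + 1 := hi
      subst hn'
      rw [key_odd i]
      have hvD : padicValNat p (∏ j ∈ Finset.range (i + 1), (2 * j + 1)) =
          padicValNat p (2 * i + 1) + padicValNat p ((2 * i).choose i) +
            padicValNat p (Nat.factorial i) := by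
        have h1 := vD_facts p hp2 i
        have h2 := vfac_decomp p i
        omega
      have b1 : (p : ℝ) ^ padicValNat p (2 * i + 1) ≤ ((2 * i + 1 : ℕ) : ℝ) := by
        have h := Nat.le_of_dvd (by omega) (pow_padicValNat_dvd (p := p) (n := 2 * i + 1))
        exact_mod_cast h
      have b2 : (p : ℝ) ^ padicValNat p ((2 * i).choose i) ≤ ((2 * i + 1 : ℕ) : ℝ) := by
        rcases Nat.eq_zero_or_pos i with rfl | hi0
        · simp
        · have h := Nat.pow_factorization_choose_le (p := p) (n := 2 * i) (k := i) (by omega)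
          rw [Nat.factorization_def _ hp] at h
          exact_mod_cast le_trans h (by omega)
      have b3 : (p : ℝ) ^ padicValNat p (Nat.factorial i) ≤ r ^ (2 * i + 1) := by
        refine le_trans (qpow_le _ _ (legendre_le p i)) ?_
        exact pow_le_pow_right₀ hr1.le (by omega)
      rw [hvD, pow_add, pow_add]
      calc ‖d₂‖ * ((p:ℝ) ^ padicValNat p (2 * i + 1) * (p:ℝ) ^ padicValNat p ((2 * i).choose i) *
            (p:ℝ) ^ padicValNat p (Nat.factorial i))
          ≤ C * (((2 * i + 1 : ℕ) : ℝ) * ((2 * i + 1 : ℕ) : ℝ) * r ^ (2 * i + 1)) := by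
            refine mul_le_mul (le_max_right _ _) ?_ (by positivity) hC0
            exact mul_le_mul (mul_le_mul b1 b2 (by positivity) (by positivity)) b3
              (by positivity) (by positivity)
        _ = C * ((2 * i + 1 : ℕ) : ℝ) ^ 2 * r ^ (2 * i + 1) := by ring
  constructor
  · intro ρ hρ0 hρ
    rw [hω] at hρ
    have hs0 : 0 ≤ r * ρ := by positivity
    have hs1 : r * ρ < 1 := by
      have h := (mul_lt_mul_of_pos_left hρ hr0)
      rwa [mul_inv_cancel₀ hr0.ne'] at h
    have hgeom : Tendsto (fun n : ℕ => C * ((n : ℝ) ^ 2 * (r * ρ) ^ n)) atTop (nhds 0) := by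
      have h := (summable_pow_mul_geometric_of_norm_lt_one 2
        (r := r * ρ) (by rwa [Real.norm_eq_abs, abs_of_nonneg hs0])).tendsto_atTop_zero
      simpa using h.const_mul C
    apply squeeze_zero' ?_ ?_ hgeom
    · exact Eventually.of_forall fun n => mul_nonneg (norm_nonneg _) (pow_nonneg hρ0 n)
    · filter_upwards [eventually_ge_atTop 1] with n hn
      calc ‖a n‖ * ρ ^ n ≤ (C * (n : ℝ) ^ 2 * r ^ n) * ρ ^ n :=
            mul_le_mul_of_nonneg_right (upper n hn) (pow_nonneg hρ0 n)
        _ = C * ((n : ℝ) ^ 2 * (r * ρ) ^ n) := by rw [mul_pow]; ring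
  · intro ρ hρ htend
    rw [hω] at hρ
    have hρ0 : 0 < ρ := lt_trans (inv_pos.mpr hr0) hρ
    by_cases hd1 : d₁ = 0
    · have hd2 : d₂ ≠ 0 := fun h => hd ⟨hd1, h⟩
      have hcomp : Tendsto (fun k : ℕ => ‖a (p ^ k)‖ * ρ ^ (p ^ k)) atTop (nhds 0) :=
        htend.comp (tendsto_atTop_mono (fun k => (Nat.lt_pow_self hp.one_lt : k < p ^ k).le) tendsto_id)
      have hδ0 : (0 : ℝ) < ‖d₂‖ * r⁻¹ :=
        mul_pos (norm_pos_iff.mpr hd2) (inv_pos.mpr hr0)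
      obtain ⟨k, hk⟩ := (hcomp.eventually_lt_const hδ0).exists
      obtain ⟨m, hm⟩ := (hp.odd_of_ne_two hp2).pow (n := k)
      have hik : p ^ k = 2 * m + 1 := by omega
      rw [hik] at hk
      have hvD : m ≤ (p - 1) * padicValNat p (∏ j ∈ Finset.range (m + 1), (2 * j + 1)) := by
        have h1 := vD_facts p hp2 m
        have h2 := legendre_le p m
        have h3 := legendre_pow p k
        rw [hik] at h3
        have h5 : (p - 1) * padicValNat p (Nat.factorial m) +
            (p - 1) * padicValNat p (∏ j ∈ Finset.range (m + 1), (2 * j + 1)) =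
            (p - 1) * padicValNat p (Nat.factorial (2 * m + 1)) := by
          rw [← Nat.mul_add, h1]
        omega
      have hlow : ‖d₂‖ * r⁻¹ ≤ ‖a (2 * m + 1)‖ * ρ ^ (2 * m + 1) := by
        rw [key_odd m]
        have e1 : r ^ (2 * m) ≤ (p : ℝ) ^ padicValNat p
            (∏ j ∈ Finset.range (m + 1), (2 * j + 1)) := qpow_ge _ _ hvD
        have e2 : r⁻¹ ^ (2 * m + 1) ≤ ρ ^ (2 * m + 1) :=
          pow_le_pow_left₀ (by positivity) hρ.le _
        have hrr : r ^ (2 * m) * r⁻¹ ^ (2 * m + 1) = r⁻¹ := by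
          rw [inv_pow, pow_succ, mul_inv, ← mul_assoc,
            mul_inv_cancel₀ (pow_ne_zero _ hr0.ne'), one_mul]
        calc ‖d₂‖ * r⁻¹ = ‖d₂‖ * (r ^ (2 * m) * r⁻¹ ^ (2 * m + 1)) := by rw [hrr]
          _ ≤ ‖d₂‖ * ((p : ℝ) ^ padicValNat p (∏ j ∈ Finset.range (m + 1), (2 * j + 1)) *
                ρ ^ (2 * m + 1)) := by
              refine mul_le_mul_of_nonneg_left ?_ (norm_nonneg _)
              exact mul_le_mul e1 e2 (by positivity) (by positivity)
          _ = ‖d₂‖ * (p : ℝ) ^ padicValNat p (∏ j ∈ Finset.range (m + 1), (2 * j + 1)) *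
                ρ ^ (2 * m + 1) := by ring
      linarith
    · have hcomp : Tendsto (fun k : ℕ => ‖a (2 * p ^ k)‖ * ρ ^ (2 * p ^ k)) atTop (nhds 0) :=
        htend.comp (tendsto_atTop_mono
          (fun k => le_trans (Nat.lt_pow_self hp.one_lt : k < p ^ k).le (by omega)) tendsto_id)
      have hδ0 : (0 : ℝ) < ‖d₁‖ * (r⁻¹) ^ 2 :=
        mul_pos (norm_pos_iff.mpr hd1) (by positivity)
      obtain ⟨k, hk⟩ := (hcomp.eventually_lt_const hδ0).exists
      have hm1 : 1 ≤ p ^ k := Nat.one_le_pow _ _ hp.pos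
      have hvk : p ^ k - 1 ≤ (p - 1) * padicValNat p (Nat.factorial (p ^ k)) := by
        have h3 := legendre_pow p k
        omega
      have hlow : ‖d₁‖ * (r⁻¹) ^ 2 ≤ ‖a (2 * p ^ k)‖ * ρ ^ (2 * p ^ k) := by
        rw [key_even (p ^ k)]
        have e1 : r ^ (2 * (p ^ k - 1)) ≤ (p : ℝ) ^ padicValNat p (Nat.factorial (p ^ k)) :=
          qpow_ge _ _ hvk
        have e2 : r⁻¹ ^ (2 * p ^ k) ≤ ρ ^ (2 * p ^ k) :=
          pow_le_pow_left₀ (by positivity) hρ.le _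
        have h2m : 2 * p ^ k = 2 * (p ^ k - 1) + 2 := by omega
        have hrr : r ^ (2 * (p ^ k - 1)) * r⁻¹ ^ (2 * p ^ k) = (r⁻¹) ^ 2 := by
          rw [h2m, pow_add, inv_pow, ← mul_assoc,
            mul_inv_cancel₀ (pow_ne_zero _ hr0.ne'), one_mul]
        calc ‖d₁‖ * (r⁻¹) ^ 2
            = ‖d₁‖ * (r ^ (2 * (p ^ k - 1)) * r⁻¹ ^ (2 * p ^ k)) := by rw [hrr]
          _ ≤ ‖d₁‖ * ((p : ℝ) ^ padicValNat p (Nat.factorial (p ^ k)) * ρ ^ (2 * p ^ k)) := by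
              refine mul_le_mul_of_nonneg_left ?_ (norm_nonneg _)
              exact mul_le_mul e1 e2 (by positivity) (by positivity)
          _ = ‖d₁‖ * (p : ℝ) ^ padicValNat p (Nat.factorial (p ^ k)) * ρ ^ (2 * p ^ k) := by
              ring
      linarith
end

section
/- Let p be odd. For every real α with ω^{1/2} < α < 1, the Laurent series a = ∑_{i≥0} (2i-1)!!·t^{-(2i+1)} has coefficients in ℤ_p satisfying |(2i-1)!!|_p·α^{-(2i+1)} → 0 as i → ∞, so a defines a bounded analytic function on the annulus α ≤ |t| < 1. -/
open Filter

lemma doublefac_eq (i : ℕ) :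
    (∏ j ∈ Finset.range i, (2 * j + 1)) * (2 ^ i * i.factorial) = (2 * i).factorial := by
  induction i with
  | zero => simp
  | succ n ih =>
    have h1 : (2 * (n + 1)).factorial = (2 * n + 2) * ((2 * n + 1) * (2 * n).factorial) := by
      rw [show 2 * (n + 1) = (2 * n + 1) + 1 by ring, Nat.factorial_succ,
        show 2 * n + 1 = (2 * n) + 1 from rfl, Nat.factorial_succ]
    rw [Finset.prod_range_succ, h1, ← ih, Nat.factorial_succ, pow_succ]
    ring

lemma doublefac_val (p : ℕ) [hp : Fact p.Prime] (hp2 : p ≠ 2) (i : ℕ) :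
    padicValNat p i.factorial ≤ padicValNat p (∏ j ∈ Finset.range i, (2 * j + 1)) := by
  have hD : (∏ j ∈ Finset.range i, (2 * j + 1)) ≠ 0 :=
    Finset.prod_ne_zero_iff.2 fun j _ => by omega
  have h2 : padicValNat p (2 ^ i) = 0 := by
    apply padicValNat.eq_zero_of_not_dvd
    intro h
    have := (Nat.prime_dvd_prime_iff_eq hp.out Nat.prime_two).1 (hp.out.dvd_of_dvd_pow h)
    exact hp2 this
  have hC : (2 * i).choose i * (i.factorial * i.factorial) = (2 * i).factorial := by
    have := Nat.choose_mul_factorial_mul_factorial (show i ≤ 2 * i by omega)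
    rw [show 2 * i - i = i by omega] at this
    linarith [this]
  have key := doublefac_eq i
  have e1 : padicValNat p (∏ j ∈ Finset.range i, (2 * j + 1)) + padicValNat p i.factorial
      = padicValNat p ((2 * i).factorial) := by
    rw [← key, padicValNat.mul hD (by positivity), padicValNat.mul (by positivity)
      i.factorial_ne_zero, h2]
    ring
  have e2 : padicValNat p ((2 * i).factorial) =
      padicValNat p ((2 * i).choose i) + (padicValNat p i.factorial + padicValNat p i.factorial) := by
    rw [← hC, padicValNat.mul (Nat.choose_pos (by omega)).ne' (by positivity),
      padicValNat.mul i.factorial_ne_zero i.factorial_ne_zero]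
  omega

lemma fact_val_bound (p : ℕ) [hp : Fact p.Prime] (i : ℕ) (hi : i ≠ 0) :
    (p:ℝ) ^ (-(padicValNat p i.factorial : ℤ)) ≤
      ((p:ℝ) ^ (-(1:ℝ)/((p:ℝ)-1))) ^ i * ((p:ℝ) * i) := by
  have hp1 : 1 < p := hp.out.one_lt
  have hpR : (1:ℝ) < p := by exact_mod_cast hp1
  have hppos : (0:ℝ) < p := by positivity
  set v := padicValNat p i.factorial with hv
  set L := Nat.log p i with hL
  have hs_le : (p.digits i).sum ≤ i := Nat.digit_sum_le p i
  have hleg : (p - 1) * v = i - (p.digits i).sum := sub_one_mul_padicValNat_factorial i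
  have hsb : (p.digits i).sum ≤ (p - 1) * (L + 1) := by
    calc (p.digits i).sum ≤ (p.digits i).length • (p - 1) :=
          List.sum_le_card_nsmul _ _ (fun x hx => by
            have := Nat.digits_lt_base hp1 hx; omega)
      _ = (L + 1) * (p - 1) := by rw [Nat.digits_len p i hp1 hi, smul_eq_mul]
      _ = (p - 1) * (L + 1) := by ring
  have hnat : i ≤ (p - 1) * v + (p - 1) * (L + 1) := by omega
  have hnR : (i:ℝ) ≤ ((p:ℝ) - 1) * v + ((p:ℝ) - 1) * (L + 1) := by
    have : ((p:ℝ) - 1) = ((p - 1 : ℕ) : ℝ) := by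
      push_cast [Nat.cast_sub hp1.le]; ring
    rw [this]
    exact_mod_cast hnat
  have hp1R : (0:ℝ) < (p:ℝ) - 1 := by linarith
  have key : -(v:ℝ) ≤ -(i:ℝ)/((p:ℝ)-1) + ((L:ℝ)+1) := by
    rw [div_add' _ _ _ hp1R.ne', le_div_iff₀ hp1R]
    nlinarith [hnR]
  calc (p:ℝ) ^ (-(v:ℤ)) = (p:ℝ) ^ (-(v:ℝ)) := by
        rw [← Real.rpow_intCast]; push_cast; ring_nf
    _ ≤ (p:ℝ) ^ (-(i:ℝ)/((p:ℝ)-1) + ((L:ℝ)+1)) :=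
        Real.rpow_le_rpow_of_exponent_le hpR.le key
    _ = (p:ℝ) ^ (-(i:ℝ)/((p:ℝ)-1)) * (p:ℝ) ^ ((L:ℝ)+1) := Real.rpow_add hppos _ _
    _ = ((p:ℝ) ^ (-(1:ℝ)/((p:ℝ)-1))) ^ i * (p:ℝ) ^ ((L:ℝ)+1) := by
        rw [← Real.rpow_natCast ((p:ℝ) ^ (-(1:ℝ)/((p:ℝ)-1))) i, ← Real.rpow_mul hppos.le]
        congr 1
        field_simp
    _ ≤ ((p:ℝ) ^ (-(1:ℝ)/((p:ℝ)-1))) ^ i * ((p:ℝ) * i) := by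
        apply mul_le_mul_of_nonneg_left _ (by positivity)
        have : (p:ℝ) ^ ((L:ℝ)+1) = ((p ^ (L+1) : ℕ) : ℝ) := by
          push_cast [← Real.rpow_natCast (p:ℝ) (L+1)]; norm_num
        rw [this]
        have hploglei : (p : ℕ) ^ L * p ≤ i * p :=
          Nat.mul_le_mul_right p (Nat.pow_log_le_self p hi)
        calc ((p ^ (L+1) : ℕ) : ℝ) = ((p ^ L * p : ℕ) : ℝ) := by rw [pow_succ]
          _ ≤ ((i * p : ℕ) : ℝ) := by exact_mod_cast hploglei
          _ = (p:ℝ) * i := by push_cast; ring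

/-- Let `p` be an odd prime, `ω = p^(-1/(p-1))`, and
`(2i-1)!! = ∏_{j=0}^{i-1}(2j+1)` with the convention `(-1)!! = -1`. For every real `α` with
`ω^(1/2) < α < 1`, the coefficients of `a = ∑ (2i-1)!!·t^(-(2i+1))` are `p`-adic integers
(`|(2i-1)!!|_p ≤ 1`) and `|(2i-1)!!|_p · α^(-(2i+1)) → 0` as `i → ∞`, so `a` is a bounded
analytic function on the annulus `α ≤ |t| < 1`. -/
theorem a_series_overconvergent (p : ℕ) (hp : p.Prime) (hp2 : p ≠ 2) (α : ℝ)
    (hα₁ : ((p : ℝ) ^ (-(1 : ℝ) / (p - 1))) ^ ((1 : ℝ) / 2) < α) (hα₂ : α < 1) :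
    let dfac : ℕ → ℤ := fun i =>
      if i = 0 then -1 else (∏ j ∈ Finset.range i, (2 * j + 1) : ℕ)
    (∀ i : ℕ, (padicNorm p (dfac i) : ℝ) ≤ 1) ∧
    Tendsto (fun i : ℕ => (padicNorm p (dfac i) : ℝ) * (α ^ (2 * i + 1))⁻¹)
      atTop (nhds 0) := by
  intro dfac
  haveI : Fact p.Prime := ⟨hp⟩
  have hppos : (0:ℝ) < p := by exact_mod_cast hp.pos
  have hpR : (1:ℝ) < p := by exact_mod_cast hp.one_lt
  set ω : ℝ := (p:ℝ) ^ (-(1:ℝ) / ((p:ℝ) - 1)) with hωdef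
  have hω : 0 < ω := Real.rpow_pos_of_pos hppos _
  have hωh : 0 < ω ^ ((1:ℝ)/2) := Real.rpow_pos_of_pos hω _
  have hα0 : 0 < α := lt_trans hωh hα₁
  have hωα : ω < α ^ 2 := by
    have h1 : ω ^ ((1:ℝ)/2) * ω ^ ((1:ℝ)/2) = ω := by
      rw [← Real.rpow_add hω]; norm_num
    calc ω = ω ^ ((1:ℝ)/2) * ω ^ ((1:ℝ)/2) := h1.symm
      _ < α * α := mul_lt_mul'' hα₁ hα₁ hωh.le hωh.le
      _ = α ^ 2 := (sq α).symm
  constructor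
  · intro i
    have := padicNorm.of_int (p := p) (dfac i)
    exact_mod_cast this
  · set β : ℝ := ω / α ^ 2 with hβdef
    have hβ0 : 0 ≤ β := by positivity
    have hβ1 : β < 1 := (div_lt_one (by positivity)).2 hωα
    apply squeeze_zero'
      (g := fun i : ℕ => ((p:ℝ)/α) * ((i:ℝ) ^ 1 * β ^ i))
    · filter_upwards with i
      have h1 : (0:ℚ) ≤ padicNorm p (dfac i) := padicNorm.nonneg _
      have h2 : (0:ℝ) ≤ (α ^ (2*i+1))⁻¹ := by positivity
      exact mul_nonneg (by exact_mod_cast h1) h2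
    · filter_upwards [eventually_ge_atTop 1] with i hi
      have hi0 : i ≠ 0 := by omega
      set D : ℕ := ∏ j ∈ Finset.range i, (2 * j + 1) with hD
      have hDne : D ≠ 0 := Finset.prod_ne_zero_iff.2 fun j _ => by omega
      have hdfac : (dfac i : ℚ) = (D : ℚ) := by
        simp [dfac, hi0, hD]
      have hnorm : padicNorm p (dfac i) = (p:ℚ) ^ (-(padicValNat p D : ℤ)) := by
        rw [hdfac, padicNorm.eq_zpow_of_nonzero (by exact_mod_cast hDne)]
        congr 1
        rw [padicValRat.of_nat]
      have hnormR : (padicNorm p (dfac i) : ℝ) = (p:ℝ) ^ (-(padicValNat p D : ℤ)) := by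
        rw [hnorm]; push_cast; ring
      have hle1 : (p:ℝ) ^ (-(padicValNat p D : ℤ)) ≤
          (p:ℝ) ^ (-(padicValNat p i.factorial : ℤ)) := by
        apply zpow_le_zpow_right₀ hpR.le
        have h := doublefac_val p hp2 i
        rw [← hD] at h
        omega
      have hle2 := fact_val_bound p i hi0
      have hchain : (padicNorm p (dfac i) : ℝ) ≤ ω ^ i * ((p:ℝ) * i) := by
        rw [hnormR]; exact hle1.trans hle2
      calc (padicNorm p (dfac i) : ℝ) * (α ^ (2*i+1))⁻¹
          ≤ ω ^ i * ((p:ℝ) * i) * (α ^ (2*i+1))⁻¹ := by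
            apply mul_le_mul_of_nonneg_right hchain (by positivity)
        _ = ((p:ℝ)/α) * ((i:ℝ) ^ 1 * β ^ i) := by
            rw [hβdef, div_pow, pow_succ, pow_mul]
            field_simp
    · have := (tendsto_pow_const_mul_const_pow_of_lt_one 1 hβ0 hβ1).const_mul ((p:ℝ)/α)
      simpa using this
end

section
/- Let K be a complete non-archimedean valued field. A formal power series f = ∑_{i≥0} a_i t^i with a_i ∈ K satisfies |f|_ρ = O((-log(1/ρ))^δ) as ρ ↑ 1 (where |f|_ρ = sup_i |a_i|ρ^i) if and only if sup_{i≥0} |a_i|/(i+1)^δ < ∞. -/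
open Filter

/-- The function `t^δ * e^{-t}` on `[0,∞)` is maximized at `t = δ`. -/
lemma rpow_mul_exp_neg_le {δ t : ℝ} (hδ : 0 ≤ δ) (ht : 0 ≤ t) :
    t ^ δ * Real.exp (-t) ≤ δ ^ δ * Real.exp (-δ) := by
  rcases eq_or_lt_of_le hδ with rfl | hδ'
  · simpa using Real.exp_le_one_iff.mpr (neg_nonpos.mpr ht)
  rcases eq_or_lt_of_le ht with h0 | ht'
  · rw [← h0, Real.zero_rpow (ne_of_gt hδ'), zero_mul]
    positivity
  have hlog : Real.log (t / δ) ≤ t / δ - 1 :=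
    Real.log_le_sub_one_of_pos (by positivity)
  have h1 : (t / δ) ^ δ ≤ Real.exp (t - δ) := by
    rw [Real.rpow_def_of_pos (by positivity)]
    apply Real.exp_le_exp.mpr
    have : Real.log (t / δ) * δ ≤ (t / δ - 1) * δ :=
      mul_le_mul_of_nonneg_right hlog hδ
    calc Real.log (t / δ) * δ ≤ (t / δ - 1) * δ := this
      _ = t - δ := by field_simp
  have h2 : t ^ δ ≤ δ ^ δ * Real.exp (t - δ) := by
    have ht' : t = δ * (t / δ) := by field_simp
    calc t ^ δ = (δ * (t / δ)) ^ δ := by rw [← ht']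
      _ = δ ^ δ * (t / δ) ^ δ := Real.mul_rpow hδ (by positivity)
      _ ≤ δ ^ δ * Real.exp (t - δ) := by
          exact mul_le_mul_of_nonneg_left h1 (by positivity)
  calc t ^ δ * Real.exp (-t) ≤ δ ^ δ * Real.exp (t - δ) * Real.exp (-t) :=
        mul_le_mul_of_nonneg_right h2 (Real.exp_nonneg _)
    _ = δ ^ δ * Real.exp (-δ) := by
        rw [mul_assoc, ← Real.exp_add]; ring_nf

/-- Let `K` be a complete non-archimedean valued field, `δ ≥ 0`, and
`f = ∑ a_i t^i` a power series converging on the open unit disc. Then the Gauss norms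
satisfy `|f|_ρ = O((log(1/ρ))^(-δ))` as `ρ ↑ 1` if and only if
`sup_i |a_i|/(i+1)^δ < ∞`; both conditions say `f` has order of log-growth at most `δ`. -/
theorem log_growth_characterization (K : Type*) [NormedField K] [CompleteSpace K]
    (hna : IsNonarchimedean (norm : K → ℝ)) (δ : ℝ) (hδ : 0 ≤ δ)
    (a : ℕ → K)
    (hconv : ∀ η : ℝ, 0 ≤ η → η < 1 →
      Tendsto (fun i : ℕ => ‖a i‖ * η ^ i) atTop (nhds 0)) :
    (∃ C : ℝ, ∃ ρ₀ : ℝ, 0 < ρ₀ ∧ ρ₀ < 1 ∧ ∀ ρ : ℝ, ρ₀ ≤ ρ → ρ < 1 →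
      (⨆ i : ℕ, ‖a i‖ * ρ ^ i) ≤ C * ((Real.log (1 / ρ))⁻¹) ^ δ) ↔
    BddAbove (Set.range fun i : ℕ => ‖a i‖ / ((i : ℝ) + 1) ^ δ) := by
  constructor
  · rintro ⟨C, ρ₀, hρ₀, hρ₁, hC⟩
    have hL₀ : 0 < Real.log (1 / ρ₀) :=
      Real.log_pos (one_lt_one_div hρ₀ hρ₁)
    set L₀ : ℝ := Real.log (1 / ρ₀) with hL₀def
    set N : ℕ := ⌈1 / L₀⌉₊ with hN
    set M₀ : ℝ := (((Finset.range N).sup fun i => ‖a i‖₊ : NNReal) : ℝ) with hM₀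
    refine ⟨max (Real.exp 1 * C) M₀, ?_⟩
    rintro x ⟨i, rfl⟩
    simp only
    have hip : (0:ℝ) < (i : ℝ) + 1 := by positivity
    have hipow : (0:ℝ) < ((i : ℝ) + 1) ^ δ := Real.rpow_pos_of_pos hip δ
    by_cases hi : (1:ℝ) / L₀ ≤ (i : ℝ) + 1
    · -- large i : choose ρ = exp(-(1/(i+1)))
      set ρ : ℝ := Real.exp (-(1 / ((i : ℝ) + 1))) with hρdef
      have hρpos : 0 < ρ := Real.exp_pos _
      have hρlt : ρ < 1 := by
        rw [hρdef, Real.exp_lt_one_iff]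
        simp only [neg_neg, Left.neg_neg_iff]
        positivity
      have hρ₀le : ρ₀ ≤ ρ := by
        have hlogρ₀ : Real.log ρ₀ = -L₀ := by
          rw [hL₀def, one_div, Real.log_inv, neg_neg]
        have h1 : 1 / ((i : ℝ) + 1) ≤ L₀ := by
          rw [div_le_iff₀ hip]
          have h2 := (div_le_iff₀ hL₀).mp hi
          nlinarith
        calc ρ₀ = Real.exp (Real.log ρ₀) := (Real.exp_log hρ₀).symm
          _ = Real.exp (-L₀) := by rw [hlogρ₀]
          _ ≤ ρ := Real.exp_le_exp.mpr (by linarith)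
      have hlog1ρ : Real.log (1 / ρ) = 1 / ((i : ℝ) + 1) := by
        rw [one_div, Real.log_inv, hρdef, Real.log_exp, neg_neg]
      have hbdd : BddAbove (Set.range fun j : ℕ => ‖a j‖ * ρ ^ j) :=
        (hconv ρ hρpos.le hρlt).bddAbove_range
      have hle : ‖a i‖ * ρ ^ i ≤ C * ((i : ℝ) + 1) ^ δ := by
        calc ‖a i‖ * ρ ^ i ≤ ⨆ j : ℕ, ‖a j‖ * ρ ^ j := le_ciSup hbdd i
          _ ≤ C * ((Real.log (1 / ρ))⁻¹) ^ δ := hC ρ hρ₀le hρlt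
          _ = C * ((i : ℝ) + 1) ^ δ := by
              rw [hlog1ρ, one_div, inv_inv]
      have hρi : Real.exp (-1) ≤ ρ ^ i := by
        rw [hρdef, ← Real.exp_nat_mul]
        apply Real.exp_le_exp.mpr
        rw [mul_neg, neg_le_neg_iff, mul_one_div, div_le_one hip]
        linarith
      have hnorm : ‖a i‖ ≤ Real.exp 1 * C * ((i : ℝ) + 1) ^ δ := by
        have h2 : ‖a i‖ * Real.exp (-1) ≤ ‖a i‖ * ρ ^ i :=
          mul_le_mul_of_nonneg_left hρi (norm_nonneg _)
        have h3 : ‖a i‖ * Real.exp (-1) ≤ C * ((i : ℝ) + 1) ^ δ := h2.trans hle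
        have hexp : Real.exp (-1) = (Real.exp 1)⁻¹ := by
          rw [Real.exp_neg]
        rw [hexp, mul_inv_le_iff₀ (Real.exp_pos 1)] at h3
        calc ‖a i‖ ≤ C * ((i : ℝ) + 1) ^ δ * Real.exp 1 := h3
          _ = Real.exp 1 * C * ((i : ℝ) + 1) ^ δ := by ring
      have : ‖a i‖ / ((i : ℝ) + 1) ^ δ ≤ Real.exp 1 * C := by
        rw [div_le_iff₀ hipow]
        exact hnorm
      exact this.trans (le_max_left _ _)
    · -- small i
      push_neg at hi
      have hiN : i < N := by
        have h1 : (i : ℝ) + 1 < (N : ℝ) := lt_of_lt_of_le hi (Nat.le_ceil _)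
        have h2 : (i : ℝ) < (N : ℝ) := by linarith
        exact_mod_cast h2
      have h1le : (1:ℝ) ≤ ((i : ℝ) + 1) ^ δ :=
        Real.one_le_rpow (by linarith) hδ
      have : ‖a i‖ / ((i : ℝ) + 1) ^ δ ≤ ‖a i‖ :=
        div_le_self (norm_nonneg _) h1le
      refine this.trans (le_trans ?_ (le_max_right _ _))
      have := Finset.le_sup (f := fun i => ‖a i‖₊) (Finset.mem_range.mpr hiN)
      exact_mod_cast this
  · rintro ⟨M, hM⟩
    have hMnorm : ∀ i : ℕ, ‖a i‖ ≤ M * ((i : ℝ) + 1) ^ δ := by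
      intro i
      have hipow : (0:ℝ) < ((i : ℝ) + 1) ^ δ := Real.rpow_pos_of_pos (by positivity) δ
      have := hM ⟨i, rfl⟩
      simp only at this
      rwa [div_le_iff₀ hipow] at this
    have hM0 : 0 ≤ M := by
      have := hM ⟨0, rfl⟩
      simp only at this
      exact le_trans (by positivity) this
    refine ⟨M * Real.exp 1 * (δ ^ δ * Real.exp (-δ)), Real.exp (-1),
      Real.exp_pos _, Real.exp_lt_one_iff.mpr (by norm_num), ?_⟩
    intro ρ hρ₀ hρ1
    have hρpos : 0 < ρ := lt_of_lt_of_le (Real.exp_pos _) hρ₀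
    set L : ℝ := Real.log (1 / ρ) with hLdef
    have hL : 0 < L := Real.log_pos (one_lt_one_div hρpos hρ1)
    have hLle : L ≤ 1 := by
      have : Real.exp (-1) ≤ ρ := hρ₀
      have h2 : -1 ≤ Real.log ρ := by
        calc (-1 : ℝ) = Real.log (Real.exp (-1)) := (Real.log_exp _).symm
          _ ≤ Real.log ρ := Real.log_le_log (Real.exp_pos _) this
      rw [hLdef, one_div, Real.log_inv]
      linarith
    apply ciSup_le
    intro i
    have hip : (0:ℝ) < (i : ℝ) + 1 := by positivity
    set t : ℝ := ((i : ℝ) + 1) * L with htdef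
    have ht : 0 < t := by positivity
    have hρeq : ρ = Real.exp (-L) := by
      rw [hLdef, one_div, Real.log_inv]
      rw [neg_neg, Real.exp_log hρpos]
    have hρi : ρ ^ i = Real.exp (-t) * Real.exp L := by
      rw [hρeq, ← Real.exp_nat_mul, ← Real.exp_add]
      congr 1
      rw [htdef]
      ring
    have hkey : ((i : ℝ) + 1) ^ δ * Real.exp (-t) ≤ δ ^ δ * Real.exp (-δ) * (L⁻¹) ^ δ := by
      have htpow : t ^ δ = ((i : ℝ) + 1) ^ δ * L ^ δ :=
        Real.mul_rpow hip.le hL.le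
      have hLpow : (0:ℝ) < L ^ δ := Real.rpow_pos_of_pos hL δ
      have heq : ((i : ℝ) + 1) ^ δ = t ^ δ / L ^ δ := by
        rw [htpow]
        field_simp
      rw [heq, Real.inv_rpow hL.le, div_mul_eq_mul_div]
      rw [div_le_iff₀ hLpow]
      calc t ^ δ * Real.exp (-t) ≤ δ ^ δ * Real.exp (-δ) :=
            rpow_mul_exp_neg_le hδ ht.le
        _ = δ ^ δ * Real.exp (-δ) * (L ^ δ)⁻¹ * L ^ δ := by
            field_simp
    calc ‖a i‖ * ρ ^ i ≤ (M * ((i : ℝ) + 1) ^ δ) * ρ ^ i := by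
          apply mul_le_mul_of_nonneg_right (hMnorm i)
          positivity
      _ = M * (((i : ℝ) + 1) ^ δ * Real.exp (-t)) * Real.exp L := by
          rw [hρi]; ring
      _ ≤ M * (δ ^ δ * Real.exp (-δ) * (L⁻¹) ^ δ) * Real.exp L := by
          apply mul_le_mul_of_nonneg_right _ (Real.exp_nonneg _)
          exact mul_le_mul_of_nonneg_left hkey hM0
      _ ≤ M * (δ ^ δ * Real.exp (-δ) * (L⁻¹) ^ δ) * Real.exp 1 := by
          apply mul_le_mul_of_nonneg_left (Real.exp_le_exp.mpr hLle)
          have : (0:ℝ) ≤ (L⁻¹) ^ δ := Real.rpow_nonneg (by positivity) δ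
          positivity
      _ = M * Real.exp 1 * (δ ^ δ * Real.exp (-δ)) * (L⁻¹) ^ δ := by ring
end

section
/- Let p ≠ 2 and K a complete discretely valued field of mixed characteristic (0,p). Let M be the rank-two differential module over K[[t]]₀ with basis e₁,e₂ and D(e₁) = e₂, D(e₂) = -e₁ - t·e₂. Then M is indecomposable: M is not isomorphic to a direct sum of two rank-one differential submodules. -/
open PowerSeries


open PowerSeries

namespace MIndecAux

variable {p : ℕ} {K : Type*} [NormedField K]

/-- bounded power series predicate -/
def BddPS (K : Type*) [NormedField K] (f : PowerSeries K) : Prop :=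
  BddAbove (Set.range fun i : ℕ => ‖PowerSeries.coeff i f‖)

lemma bddPS_iff {f : PowerSeries K} :
    BddPS K f ↔ ∃ B : ℝ, 0 ≤ B ∧ ∀ i : ℕ, ‖coeff i f‖ ≤ B := by
  constructor
  · rintro ⟨B, hB⟩
    exact ⟨max B 0, le_max_right _ _, fun i =>
      le_max_of_le_left (hB (Set.mem_range_self i))⟩
  · rintro ⟨B, _, hB⟩
    exact ⟨B, by rintro x ⟨i, rfl⟩; exact hB i⟩

lemma bddPS_sub {f g : PowerSeries K} (hf : BddPS K f) (hg : BddPS K g) :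
    BddPS K (f - g) := by
  obtain ⟨A, hA0, hA⟩ := bddPS_iff.mp hf
  obtain ⟨B, hB0, hB⟩ := bddPS_iff.mp hg
  refine bddPS_iff.mpr ⟨A + B, by linarith, fun i => ?_⟩
  rw [map_sub]
  exact (norm_sub_le _ _).trans (add_le_add (hA i) (hB i))

lemma bddPS_neg {f : PowerSeries K} (hf : BddPS K f) : BddPS K (-f) := by
  obtain ⟨A, hA0, hA⟩ := bddPS_iff.mp hf
  refine bddPS_iff.mpr ⟨A, hA0, fun i => ?_⟩
  rw [map_neg, norm_neg]; exact hA i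

lemma bddPS_one : BddPS K 1 := by
  refine bddPS_iff.mpr ⟨1, zero_le_one, fun i => ?_⟩
  rw [coeff_one]
  split_ifs <;> simp

lemma bddPS_zero : BddPS K 0 := by
  refine bddPS_iff.mpr ⟨1, zero_le_one, fun i => ?_⟩
  simp

lemma bddPS_X : BddPS K X := by
  refine bddPS_iff.mpr ⟨1, zero_le_one, fun i => ?_⟩
  rw [coeff_X]
  split_ifs <;> simp

lemma bddPS_mul [IsUltrametricDist K] {f g : PowerSeries K}
    (hf : BddPS K f) (hg : BddPS K g) : BddPS K (f * g) := by
  obtain ⟨A, hA0, hA⟩ := bddPS_iff.mp hf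
  obtain ⟨B, hB0, hB⟩ := bddPS_iff.mp hg
  refine bddPS_iff.mpr ⟨A * B, mul_nonneg hA0 hB0, fun i => ?_⟩
  rw [coeff_mul]
  refine IsUltrametricDist.norm_sum_le_of_forall_le_of_nonneg (mul_nonneg hA0 hB0)
    (fun q _ => ?_)
  rw [norm_mul]
  exact mul_le_mul (hA _) (hB _) (norm_nonneg _) hA0




variable {p : ℕ} {K : Type*} [NormedField K]

lemma norm_natCast_le_one (hp : p.Prime)
    (hK : ∀ q : ℚ, ‖(q : K)‖ = (padicNorm p q : ℝ)) (n : ℕ) : ‖(n : K)‖ ≤ 1 := by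
  haveI : Fact p.Prime := ⟨hp⟩
  have h := hK (n : ℚ)
  rw [Rat.cast_natCast] at h
  rw [h]
  exact_mod_cast padicNorm.of_nat (p := p) n

lemma ultra (hp : p.Prime) (hK : ∀ q : ℚ, ‖(q : K)‖ = (padicNorm p q : ℝ)) :
    IsUltrametricDist K :=
  IsUltrametricDist.isUltrametricDist_of_forall_norm_natCast_le_one
    (norm_natCast_le_one hp hK)

lemma charZeroK (hp : p.Prime) (hK : ∀ q : ℚ, ‖(q : K)‖ = (padicNorm p q : ℝ)) :
    CharZero K := by
  haveI : Fact p.Prime := ⟨hp⟩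
  have key : ∀ k : ℕ, (k : K) = 0 → k = 0 := by
    intro k hk
    by_contra hk0
    have h := hK (k : ℚ)
    rw [Rat.cast_natCast, hk, norm_zero] at h
    have h2 := padicNorm.nonzero (p := p) (q := (k : ℚ)) (by exact_mod_cast hk0)
    exact h2 (by exact_mod_cast h.symm)
  refine ⟨fun a b hab => ?_⟩
  rcases le_total a b with hle | hle
  · obtain ⟨k, rfl⟩ := Nat.exists_eq_add_of_le hle
    rw [Nat.cast_add, left_eq_add] at hab
    rw [key k hab, add_zero]
  · obtain ⟨k, rfl⟩ := Nat.exists_eq_add_of_le hle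
    rw [Nat.cast_add, add_eq_left] at hab
    rw [key k hab, add_zero]

lemma norm_natCast_le_of_dvd (hp : p.Prime)
    (hK : ∀ q : ℚ, ‖(q : K)‖ = (padicNorm p q : ℝ)) {m u : ℕ} (hd : p ^ m ∣ u) :
    ‖(u : K)‖ ≤ (p : ℝ) ^ (-(m : ℤ)) := by
  haveI : Fact p.Prime := ⟨hp⟩
  have h := hK (u : ℚ)
  rw [Rat.cast_natCast] at h
  rw [h]
  have hdz : ((p ^ m : ℕ) : ℤ) ∣ (u : ℤ) := Int.natCast_dvd_natCast.mpr hd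
  have := (padicNorm.dvd_iff_norm_le (p := p) (n := m) (z := (u : ℤ))).mp hdz
  rw [show ((u : ℤ) : ℚ) = (u : ℚ) by push_cast; ring] at this
  calc ((padicNorm p (u : ℚ) : ℝ)) ≤ (((p : ℚ) ^ (-(m : ℤ)) : ℚ) : ℝ) := by exact_mod_cast this
    _ = (p : ℝ) ^ (-(m : ℤ)) := by push_cast; ring



variable {p : ℕ} {K : Type*} [NormedField K]

def fac2 : ℕ → ℕ
  | 0 => 1
  | k+1 => fac2 k * (2*k+2)

lemma fac2_ne_zero : ∀ k, fac2 k ≠ 0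
  | 0 => one_ne_zero
  | k+1 => Nat.mul_ne_zero (fac2_ne_zero k) (by omega)

lemma factorial_dvd_fac2 : ∀ k, k.factorial ∣ fac2 k
  | 0 => dvd_refl 1
  | k+1 => by
    rw [Nat.factorial_succ, show fac2 (k+1) = fac2 k * (2*k+2) from rfl]
    have h1 : (k+1) ∣ (2*k+2) := ⟨2, by ring⟩
    have h2 := mul_dvd_mul h1 (factorial_dvd_fac2 k)
    simpa [Nat.mul_comm] using h2

lemma pow_dvd_factorial_mul (hp : p.Prime) : ∀ m, p ^ m ∣ (p * m).factorial := by
  intro m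
  induction m with
  | zero => simp
  | succ m ih =>
    obtain ⟨s, hs⟩ : ∃ s, p = s + 1 := ⟨p - 1, by have := hp.pos; omega⟩
    have h1 : p * (m + 1) = (p * m + s) + 1 := by
      rw [Nat.mul_succ]; omega
    rw [h1, Nat.factorial_succ]
    have hd1 : p ∣ (p * m + s + 1) := by rw [← h1]; exact Dvd.intro (m+1) rfl
    have hd2 : p ^ m ∣ (p * m + s).factorial :=
      ih.trans (Nat.factorial_dvd_factorial (by omega))
    rw [pow_succ, Nat.mul_comm (p^m) p]
    exact mul_dvd_mul hd1 hd2

def odf : ℕ → ℕ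
  | 0 => 1
  | k+1 => odf k * (2*k+3)


lemma eq_zero_of_deriv_eq_X_mul (hp : p.Prime)
    (hK : ∀ q : ℚ, ‖(q : K)‖ = (padicNorm p q : ℝ))
    {N : PowerSeries K} (hB : BddPS K N)
    (hODE : PowerSeries.derivative K N = X * N) : N = 0 := by
  haveI : Fact p.Prime := ⟨hp⟩
  haveI : CharZero K := charZeroK hp hK
  obtain ⟨B, hB0, hBle⟩ := bddPS_iff.mp hB
  have h1 : coeff 1 N = 0 := by
    have h := congrArg (coeff 0) hODE
    rw [coeff_derivative, coeff_zero_X_mul] at h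
    simpa using h
  have hrec : ∀ n : ℕ, coeff (n + 2) N * ((n : K) + 2) = coeff n N := by
    intro n
    have h := congrArg (coeff (n + 1)) hODE
    rw [coeff_derivative, coeff_succ_X_mul] at h
    have e1 : (n + 1 + 1) = n + 2 := by ring
    rw [e1] at h
    rw [← h]
    push_cast
    ring
  have heven : ∀ k, (fac2 k : K) * coeff (2 * k) N = coeff 0 N := by
    intro k
    induction k with
    | zero => simp [fac2]
    | succ k ih =>
      have h := hrec (2 * k)
      have e1 : 2 * (k + 1) = 2 * k + 2 := by ring
      have e2 : (fac2 (k + 1) : K) = (fac2 k : K) * ((2 * k : K) + 2) := by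
        show ((fac2 k * (2 * k + 2) : ℕ) : K) = _
        push_cast; ring
      rw [e1, e2]
      calc (fac2 k : K) * ((2 * k : K) + 2) * coeff (2 * k + 2) N
          = (fac2 k : K) * (coeff (2 * k + 2) N * (((2 * k : ℕ) : K) + 2)) := by
            push_cast; ring
        _ = (fac2 k : K) * coeff (2 * k) N := by rw [hrec (2 * k)]
        _ = coeff 0 N := ih
  have hc0 : coeff 0 N = 0 := by
    by_contra hc0
    have hpos : 0 < ‖coeff 0 N‖ := norm_pos_iff.mpr hc0
    have hp1 : (1 : ℝ) < (p : ℝ) := by exact_mod_cast hp.one_lt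
    obtain ⟨m, hm⟩ := pow_unbounded_of_one_lt (B / ‖coeff 0 N‖) hp1
    have hdvd : p ^ m ∣ fac2 (p * m) :=
      (pow_dvd_factorial_mul hp m).trans (factorial_dvd_fac2 _)
    have hnorm := norm_natCast_le_of_dvd hp hK hdvd
    have hkey := heven (p * m)
    have hle : ‖coeff 0 N‖ ≤ (p : ℝ) ^ (-(m : ℤ)) * B := by
      rw [← hkey, norm_mul]
      exact mul_le_mul hnorm (hBle _) (norm_nonneg _) (by positivity)
    rw [zpow_neg, zpow_natCast] at hle
    have hppos : (0 : ℝ) < (p : ℝ) ^ m := by positivity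
    rw [div_lt_iff₀ hpos] at hm
    have h2 : (p : ℝ) ^ m * ‖coeff 0 N‖ ≤ B := by
      have h3 := mul_le_mul_of_nonneg_left hle (le_of_lt hppos)
      rwa [← mul_assoc, mul_inv_cancel₀ (ne_of_gt hppos), one_mul] at h3
    linarith
  have hevenz : ∀ k, coeff (2 * k) N = 0 := by
    intro k
    have h := heven k
    rw [hc0] at h
    have hne : (fac2 k : K) ≠ 0 := Nat.cast_ne_zero.mpr (fac2_ne_zero k)
    exact (mul_eq_zero.mp h).resolve_left hne
  have hoddz : ∀ k, coeff (2 * k + 1) N = 0 := by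
    intro k
    induction k with
    | zero => simpa using h1
    | succ k ih =>
      have h := hrec (2 * k + 1)
      rw [ih] at h
      have hne : ((2 * k + 1 : ℕ) : K) + 2 ≠ 0 := by
        have : (((2 * k + 3 : ℕ)) : K) ≠ 0 := Nat.cast_ne_zero.mpr (by omega)
        push_cast at this ⊢
        intro hcon; apply this; linear_combination hcon
      have e1 : 2 * (k + 1) + 1 = (2 * k + 1) + 2 := by ring
      rw [e1]
      exact (mul_eq_zero.mp h).resolve_right hne
  ext n
  rw [map_zero]
  rcases Nat.even_or_odd n with he | ho
  · obtain ⟨k, hk⟩ := he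
    rw [show n = 2 * k by omega]
    exact hevenz k
  · obtain ⟨k, hk⟩ := ho
    rw [hk]
    exact hoddz k

lemma no_bdd_riccati (hp : p.Prime) (hp2 : p ≠ 2)
    (hK : ∀ q : ℚ, ‖(q : K)‖ = (padicNorm p q : ℝ))
    {f : PowerSeries K} (hB : BddPS K f)
    (hODE : PowerSeries.derivative K f = -1 - X * f) : False := by
  haveI : Fact p.Prime := ⟨hp⟩
  obtain ⟨B, hB0, hBle⟩ := bddPS_iff.mp hB
  have h1 : coeff 1 f = -1 := by
    have h := congrArg (coeff 0) hODE
    rw [coeff_derivative] at h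
    simpa using h
  have hrec : ∀ n : ℕ, coeff (n + 2) f * ((n : K) + 2) = -coeff n f := by
    intro n
    have h := congrArg (coeff (n + 1)) hODE
    rw [coeff_derivative] at h
    have h2 : coeff (n + 1) (-1 - X * f) = -coeff n f := by
      rw [map_sub, map_neg, coeff_one, coeff_succ_X_mul]
      simp
    rw [h2] at h
    have e1 : (n + 1 + 1) = n + 2 := by ring
    rw [e1] at h
    rw [← h]
    push_cast
    ring
  have hchain : ∀ k, (odf k : K) * coeff (2 * k + 1) f = (-1) ^ (k + 1) := by
    intro k
    induction k with
    | zero => simpa [odf] using h1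
    | succ k ih =>
      have h := hrec (2 * k + 1)
      have e1 : 2 * (k + 1) + 1 = (2 * k + 1) + 2 := by ring
      have e2 : (odf (k + 1) : K) = (odf k : K) * (((2 * k + 1 : ℕ) : K) + 2) := by
        show ((odf k * (2 * k + 3) : ℕ) : K) = _
        push_cast; ring
      rw [e1, e2]
      calc (odf k : K) * (((2 * k + 1 : ℕ) : K) + 2) * coeff ((2 * k + 1) + 2) f
          = (odf k : K) * (coeff ((2 * k + 1) + 2) f * (((2 * k + 1 : ℕ) : K) + 2)) := by
            push_cast; ring
        _ = (odf k : K) * (-coeff (2 * k + 1) f) := by rw [h]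
        _ = -((odf k : K) * coeff (2 * k + 1) f) := by ring
        _ = -(-1) ^ (k + 1) := by rw [ih]
        _ = (-1) ^ (k + 1 + 1) := by ring
  have hp1 : (1 : ℝ) < (p : ℝ) := by exact_mod_cast hp.one_lt
  obtain ⟨m, hm⟩ := pow_unbounded_of_one_lt B hp1
  have hM : B < (p : ℝ) ^ (m + 1) :=
    lt_of_lt_of_le hm (pow_le_pow_right₀ (le_of_lt hp1) (Nat.le_succ m))
  have hodd : Odd (p ^ (m + 1)) := (hp.odd_of_ne_two hp2).pow
  obtain ⟨k, hk⟩ := hodd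
  have hp3 : 3 ≤ p := by have := hp.two_le; omega
  have hpow : p ≤ p ^ (m + 1) := Nat.le_self_pow (by omega) p
  have hk1 : 1 ≤ k := by omega
  obtain ⟨j, rfl⟩ : ∃ j, k = j + 1 := ⟨k - 1, by omega⟩
  have hdvd : p ^ (m + 1) ∣ odf (j + 1) := by
    have : odf (j + 1) = odf j * (2 * j + 3) := rfl
    rw [this, show 2 * j + 3 = p ^ (m + 1) by omega]
    exact Dvd.intro_left (odf j) rfl
  have hnorm := norm_natCast_le_of_dvd hp hK hdvd
  have hch := hchain (j + 1)
  have hnorm1 : ‖(odf (j + 1) : K)‖ * ‖coeff (2 * (j + 1) + 1) f‖ = 1 := by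
    rw [← norm_mul, hch]
    simp
  have hle : (1 : ℝ) ≤ (p : ℝ) ^ (-(m + 1 : ℕ) : ℤ) * B := by
    rw [← hnorm1]
    exact mul_le_mul hnorm (hBle _) (norm_nonneg _) (by positivity)
  rw [zpow_neg, zpow_natCast] at hle
  have hppos : (0 : ℝ) < (p : ℝ) ^ (m + 1) := by positivity
  have h2 : (p : ℝ) ^ (m + 1) ≤ B := by
    have h3 := mul_le_mul_of_nonneg_left hle (le_of_lt hppos)
    rwa [mul_one, ← mul_assoc, mul_inv_cancel₀ (ne_of_gt hppos), one_mul] at h3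
  linarith

lemma dmul (f g : PowerSeries K) :
    PowerSeries.derivative K (f * g) =
      f * PowerSeries.derivative K g + g * PowerSeries.derivative K f := by
  rw [Derivation.leibniz, smul_eq_mul, smul_eq_mul]

lemma core (hp : p.Prime) (hp2 : p ≠ 2)
    (hK : ∀ q : ℚ, ‖(q : K)‖ = (padicNorm p q : ℝ)) [IsUltrametricDist K]
    {g h l u : PowerSeries K}
    (hBh : BddPS K h) (hBu : BddPS K u)
    (E1 : PowerSeries.derivative K g - h = l * g)
    (E2 : g + PowerSeries.derivative K h - X * h = l * h)
    (hu : (g - X * h) * u = 1) : False := by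
  have hDg : PowerSeries.derivative K g = l * g + h := by linear_combination E1
  have hDh : PowerSeries.derivative K h = l * h - g + X * h := by linear_combination E2
  have hds : PowerSeries.derivative K (g - X * h) = (l + X) * (g - X * h) := by
    rw [map_sub, dmul, derivative_X, mul_one, hDg, hDh]
    ring
  have hdu : (g - X * h) * PowerSeries.derivative K u
      + u * PowerSeries.derivative K (g - X * h) = 0 := by
    have h0 := congrArg (PowerSeries.derivative K) hu
    rw [dmul] at h0
    simpa using h0
  have hdu2 : PowerSeries.derivative K u = -(u * u) * ((l + X) * (g - X * h)) := by
    rw [← hds]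
    linear_combination u * hdu - (PowerSeries.derivative K u) * hu
  have hq : PowerSeries.derivative K (h * u) = -1 - X * (h * u) := by
    rw [dmul, hdu2, hDh]
    linear_combination (-(h * u * (l + X)) - 1) * hu
  exact no_bdd_riccati hp hp2 hK (bddPS_mul hBh hBu) hq

end MIndecAux

open MIndecAux

/-- Let `p ≠ 2` be prime and `K` a complete discretely valued field of
mixed characteristic `(0,p)` (its norm restricts to the `p`-adic norm on `ℚ`). Let `M` be the
rank-two differential module over `K[[t]]₀` (bounded power series) with basis `e₁, e₂` and
`D(e₁) = e₂`, `D(e₂) = -e₁ - t·e₂`, so that on coordinates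
`D(g,h) = (g' - h, g + h' - t·h)`. Then `M` is indecomposable: there is no decomposition of
`M` as a direct sum of two rank-one differential submodules, i.e. no basis `v₁, v₂` of `M`
over `K[[t]]₀` with `D(vᵢ) = λᵢ·vᵢ` for some `λᵢ ∈ K[[t]]₀`. -/
theorem M_indecomposable (p : ℕ) (hp : p.Prime) (hp2 : p ≠ 2)
    (K : Type*) [NormedField K] [CompleteSpace K]
    (hK : ∀ q : ℚ, ‖(q : K)‖ = (padicNorm p q : ℝ))
    (hdisc : ∃ π : K, 0 < ‖π‖ ∧ ‖π‖ < 1 ∧ ∀ x : K, x ≠ 0 → ∃ n : ℤ, ‖x‖ = ‖π‖ ^ n) :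
    let Bdd : PowerSeries K → Prop := fun f =>
      BddAbove (Set.range fun i : ℕ => ‖PowerSeries.coeff i f‖)
    let D : PowerSeries K × PowerSeries K → PowerSeries K × PowerSeries K := fun v =>
      (PowerSeries.derivative K v.1 - v.2,
        v.1 + PowerSeries.derivative K v.2 - PowerSeries.X * v.2)
    ¬ ∃ (v₁ v₂ : PowerSeries K × PowerSeries K) (l₁ l₂ : PowerSeries K),
      Bdd v₁.1 ∧ Bdd v₁.2 ∧ Bdd v₂.1 ∧ Bdd v₂.2 ∧ Bdd l₁ ∧ Bdd l₂ ∧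
      D v₁ = (l₁ * v₁.1, l₁ * v₁.2) ∧ D v₂ = (l₂ * v₂.1, l₂ * v₂.2) ∧
      (∀ w : PowerSeries K × PowerSeries K, Bdd w.1 → Bdd w.2 →
        ∃ c₁ c₂ : PowerSeries K, Bdd c₁ ∧ Bdd c₂ ∧
          w = (c₁ * v₁.1 + c₂ * v₂.1, c₁ * v₁.2 + c₂ * v₂.2)) ∧
      (∀ c₁ c₂ : PowerSeries K,
        (c₁ * v₁.1 + c₂ * v₂.1, c₁ * v₁.2 + c₂ * v₂.2) = ((0 : PowerSeries K), (0 : PowerSeries K)) →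
        c₁ = 0 ∧ c₂ = 0) := by
  intro Bdd D
  rintro ⟨⟨g₁, h₁⟩, ⟨g₂, h₂⟩, l₁, l₂, Bg₁, Bh₁, Bg₂, Bh₂, Bl₁, Bl₂, hv₁, hv₂, hspan, hindep⟩
  haveI : Fact p.Prime := ⟨hp⟩
  haveI : IsUltrametricDist K := MIndecAux.ultra hp hK
  have E1a : PowerSeries.derivative K g₁ - h₁ = l₁ * g₁ := congrArg Prod.fst hv₁
  have E1b : g₁ + PowerSeries.derivative K h₁ - PowerSeries.X * h₁ = l₁ * h₁ :=
    congrArg Prod.snd hv₁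
  have E2a : PowerSeries.derivative K g₂ - h₂ = l₂ * g₂ := congrArg Prod.fst hv₂
  have E2b : g₂ + PowerSeries.derivative K h₂ - PowerSeries.X * h₂ = l₂ * h₂ :=
    congrArg Prod.snd hv₂
  obtain ⟨c, d, Bc, Bd, hcd⟩ := hspan (1, 0) bddPS_one bddPS_zero
  obtain ⟨e, f, Be, Bf, hef⟩ := hspan (0, 1) bddPS_zero bddPS_one
  obtain ⟨c₁, c₂, Bc₁, Bc₂, hw⟩ := hspan (PowerSeries.X, 1) bddPS_X bddPS_one
  have hcd1 : (1 : PowerSeries K) = c * g₁ + d * g₂ := congrArg Prod.fst hcd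
  have hcd2 : (0 : PowerSeries K) = c * h₁ + d * h₂ := congrArg Prod.snd hcd
  have hef1 : (0 : PowerSeries K) = e * g₁ + f * g₂ := congrArg Prod.fst hef
  have hef2 : (1 : PowerSeries K) = e * h₁ + f * h₂ := congrArg Prod.snd hef
  have hw1 : (PowerSeries.X : PowerSeries K) = c₁ * g₁ + c₂ * g₂ := congrArg Prod.fst hw
  have hw2 : (1 : PowerSeries K) = c₁ * h₁ + c₂ * h₂ := congrArg Prod.snd hw
  have hWu : (g₁ * h₂ - g₂ * h₁) * (c * f - e * d) = 1 := by
    linear_combination (-(e * h₁ + f * h₂)) * hcd1 - hef2 + (c * h₁ + d * h₂) * hef1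
  have hdspan1 := congrArg (PowerSeries.derivative K) hw1
  rw [PowerSeries.derivative_X, map_add, dmul, dmul] at hdspan1
  have hdspan2 : (0 : PowerSeries K) =
      c₁ * PowerSeries.derivative K h₁ + h₁ * PowerSeries.derivative K c₁
      + (c₂ * PowerSeries.derivative K h₂ + h₂ * PowerSeries.derivative K c₂) := by
    have h0 := congrArg (PowerSeries.derivative K) hw2
    rw [map_add, dmul, dmul] at h0
    simpa using h0
  have hA : (PowerSeries.derivative K c₁ + l₁ * c₁) * g₁
      + (PowerSeries.derivative K c₂ + l₂ * c₂) * g₂ = 0 := by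
    linear_combination -hdspan1 - c₁ * E1a - c₂ * E2a + hw2
  have hB : (PowerSeries.derivative K c₁ + l₁ * c₁) * h₁
      + (PowerSeries.derivative K c₂ + l₂ * c₂) * h₂ = 0 := by
    linear_combination -hdspan2 - c₁ * E1b - c₂ * E2b - hw1 + PowerSeries.X * hw2
  obtain ⟨hA0, hB0⟩ := hindep _ _ (by rw [Prod.mk.injEq]; exact ⟨hA, hB⟩)
  have hW' : PowerSeries.derivative K (g₁ * h₂ - g₂ * h₁)
      = (l₁ + l₂ + PowerSeries.X) * (g₁ * h₂ - g₂ * h₁) := by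
    rw [map_sub, dmul, dmul]
    linear_combination h₂ * E1a + g₁ * E2b - g₂ * E1b - h₁ * E2a
  have hN' : PowerSeries.derivative K (c₁ * (c₂ * (g₁ * h₂ - g₂ * h₁)))
      = PowerSeries.X * (c₁ * (c₂ * (g₁ * h₂ - g₂ * h₁))) := by
    rw [dmul, dmul]
    linear_combination c₁ * c₂ * hW' + c₁ * (g₁ * h₂ - g₂ * h₁) * hB0
      + c₂ * (g₁ * h₂ - g₂ * h₁) * hA0
  have hNB : BddPS K (c₁ * (c₂ * (g₁ * h₂ - g₂ * h₁))) :=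
    bddPS_mul Bc₁ (bddPS_mul Bc₂ (bddPS_sub (bddPS_mul Bg₁ Bh₂) (bddPS_mul Bg₂ Bh₁)))
  have hN0 : c₁ * (c₂ * (g₁ * h₂ - g₂ * h₁)) = 0 :=
    eq_zero_of_deriv_eq_X_mul hp hK hNB hN'
  have hcases : c₁ = 0 ∨ c₂ = 0 := by
    rcases mul_eq_zero.mp hN0 with h0 | h0
    · exact Or.inl h0
    · rcases mul_eq_zero.mp h0 with h0' | h0'
      · exact Or.inr h0'
      · exfalso; rw [h0', zero_mul] at hWu; exact zero_ne_one hWu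
  rcases hcases with h0 | h0
  · -- c₁ = 0 : the line through (X,1) is spanned by v₂; use v₁ data
    rw [h0] at hw1 hw2
    refine core hp hp2 hK Bh₁
      (bddPS_mul Bh₂ (bddPS_sub (bddPS_mul Bc Bf) (bddPS_mul Be Bd))) E1a E1b ?_
    linear_combination (-(h₁ * h₂ * (c * f - e * d))) * hw1 + (c₂ * h₂) * hWu
      + (g₁ * h₂ * (c * f - e * d) - 1) * hw2
  · rw [h0] at hw1 hw2
    refine core hp hp2 hK Bh₂
      (bddPS_neg (bddPS_mul Bh₁ (bddPS_sub (bddPS_mul Bc Bf) (bddPS_mul Be Bd)))) E2a E2b ?_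
    linear_combination (h₂ * h₁ * (c * f - e * d)) * hw1 + (c₁ * h₁) * hWu
      + (-(g₂ * h₁ * (c * f - e * d)) - 1) * hw2
end

section
/- Let p ≠ 2 and K a complete discretely valued field of mixed characteristic (0,p). Let M be the differential module over K[[t]]₀ with basis e₁,e₂, D(e₁) = e₂, D(e₂) = -e₁ - t·e₂. Then the space of horizontal sections of M ⊗ K{t} (power series converging on the open unit disc) equals K·(t·e₁ + e₂); in particular it is one-dimensional and every horizontal section over K{t} is already defined over K[[t]]₀. -/
open PowerSeries Filter

private lemma pow_div_dvd_factorial (p : ℕ) (hp : p.Prime) (k : ℕ) :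
    p ^ (k / p) ∣ k.factorial := by
  rcases lt_or_ge k p with h | h
  · simp [Nat.div_eq_of_lt h]
  · apply (Nat.Prime.pow_dvd_factorial_iff hp (Nat.lt_succ_self _)).mpr
    calc k / p = k / p ^ 1 := by rw [pow_one]
      _ ≤ ∑ i ∈ Finset.Ico 1 (Nat.log p k + 1), k / p ^ i := by
        apply Finset.single_le_sum (f := fun i => k / p ^ i) (fun i _ => Nat.zero_le _)
        have := Nat.log_pos hp.one_lt h
        simp only [Finset.mem_Ico]; omega

/-- Let `p ≠ 2` be prime and `K` a complete discretely valued field of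
mixed characteristic `(0,p)`. Let `M` be the differential module over `K[[t]]₀` with basis
`e₁, e₂`, `D(e₁) = e₂`, `D(e₂) = -e₁ - t·e₂`, so on coordinates
`D(g,h) = (g' - h, g + h' - t·h)`. Then the horizontal sections of `M ⊗ K{t}` (coordinates
converging on the open unit disc) are exactly `K·(t·e₁ + e₂)`: `D(g,h) = 0` iff
`(g,h) = (d·t, d)` for some `d ∈ K`. In particular the space of horizontal sections is
one-dimensional and consists of sections defined over `K[[t]]₀`. -/
theorem horizontal_sections_of_M (p : ℕ) (hp : p.Prime) (hp2 : p ≠ 2)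
    (K : Type*) [NormedField K] [CompleteSpace K]
    (hK : ∀ q : ℚ, ‖(q : K)‖ = (padicNorm p q : ℝ))
    (hdisc : ∃ π : K, 0 < ‖π‖ ∧ ‖π‖ < 1 ∧ ∀ x : K, x ≠ 0 → ∃ n : ℤ, ‖x‖ = ‖π‖ ^ n) :
    let Conv : PowerSeries K → Prop := fun f => ∀ η : ℝ, 0 ≤ η → η < 1 →
      Tendsto (fun i : ℕ => ‖PowerSeries.coeff (R := K) i f‖ * η ^ i) atTop (nhds 0)
    ∀ g h : PowerSeries K, Conv g → Conv h →
      ((PowerSeries.derivative K g - h = 0 ∧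
        g + PowerSeries.derivative K h - PowerSeries.X * h = 0) ↔
      ∃ d : K, g = PowerSeries.C (R := K) d * PowerSeries.X ∧ h = PowerSeries.C (R := K) d) := by
  intro Conv g h hg hh
  haveI : Fact p.Prime := ⟨hp⟩
  have hp1 : 1 < p := hp.one_lt
  have hP1 : (1 : ℝ) < (p : ℝ) := by exact_mod_cast hp1
  have hP0 : (0 : ℝ) < (p : ℝ) := by linarith
  -- norms of integers
  have hInt : ∀ z : ℤ, ‖(z : K)‖ = (padicNorm p z : ℝ) := by
    intro z
    have := hK (z : ℚ)
    push_cast at this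
    exact this
  have hIntLe : ∀ z : ℤ, ‖(z : K)‖ ≤ 1 := by
    intro z
    rw [hInt]
    exact_mod_cast padicNorm.of_int z
  have hIntNe : ∀ z : ℤ, z ≠ 0 → (z : K) ≠ 0 := by
    intro z hz hzero
    have h1 : ‖(z : K)‖ = 0 := by rw [hzero, norm_zero]
    rw [hInt] at h1
    have : padicNorm p z ≠ 0 := padicNorm.nonzero (by exact_mod_cast hz)
    exact this (by exact_mod_cast h1)
  haveI : CharZero K := by
    constructor
    intro a b hab
    by_contra hne
    have : ((a : ℤ) - (b : ℤ)) ≠ 0 := by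
      intro hz; apply hne; omega
    apply hIntNe _ this
    push_cast
    rw [hab]; ring
  constructor
  · rintro ⟨h1, h2⟩
    have h1' : (PowerSeries.derivative K) g = h := sub_eq_zero.mp h1
    set a : ℕ → K := fun n => PowerSeries.coeff (R := K) n g with ha
    have hcoh : ∀ n : ℕ, PowerSeries.coeff (R := K) n h = a (n + 1) * ((n : K) + 1) := by
      intro n; rw [← h1', coeff_derivative]
    -- the recurrence
    have hrec : ∀ n : ℕ, ((n : K) + 1) * ((n : K) + 2) * a (n + 2) = ((n : K) - 1) * a n := by
      intro n
      have h2n := congrArg (PowerSeries.coeff (R := K) n) h2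
      simp only [map_sub, map_add, map_zero, coeff_derivative, hcoh] at h2n
      cases n with
      | zero =>
        rw [coeff_zero_X_mul] at h2n
        have : a 0 = PowerSeries.coeff (R := K) 0 g := rfl
        push_cast at h2n ⊢
        linear_combination h2n
      | succ m =>
        rw [coeff_succ_X_mul, hcoh] at h2n
        push_cast at h2n ⊢
        linear_combination h2n
    -- a 0 = 0
    have ha0 : a 0 = 0 := by
      by_contra ha0
      have key : ∀ k : ℕ, a 0 =
          -(a (2 * k)) * (2 ^ k * (k.factorial : K) * (2 * (k : K) - 1)) := by
        intro k
        induction k with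
        | zero => simp
        | succ k ih =>
          have hr := hrec (2 * k)
          have h2k : 2 * (k + 1) = 2 * k + 2 := by ring
          rw [h2k]
          rw [ih]
          push_cast [Nat.factorial_succ] at hr ⊢
          linear_combination ((2 : K) ^ k * (k.factorial : K)) * hr
      -- norm lower bound
      have hfact : ∀ k : ℕ, ‖((k.factorial : ℕ) : K)‖ ≤ ((p : ℝ)⁻¹) ^ (k / p) := by
        intro k
        obtain ⟨m, hm⟩ := pow_div_dvd_factorial p hp k
        have : ((k.factorial : ℕ) : K) = (p : K) ^ (k / p) * (m : K) := by
          rw [hm]; push_cast; ring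
        rw [this, norm_mul, norm_pow]
        have hpnorm : ‖(p : K)‖ = (p : ℝ)⁻¹ := by
          have := hInt (p : ℤ)
          push_cast at this
          rw [this]
          rw [padicNorm.padicNorm_p hp1]
          push_cast
          rfl
        rw [hpnorm]
        calc ((p:ℝ)⁻¹) ^ (k / p) * ‖(m : K)‖ ≤ ((p:ℝ)⁻¹) ^ (k / p) * 1 := by
              apply mul_le_mul_of_nonneg_left _ (by positivity)
              have := hIntLe (m : ℤ); push_cast at this; exact this
          _ = ((p:ℝ)⁻¹) ^ (k / p) := mul_one _
      -- choose η
      set η : ℝ := (p : ℝ) ^ (-(1 / (4 * (p : ℝ)))) with hηdef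
      have hη0 : 0 < η := Real.rpow_pos_of_pos hP0 _
      have hη1 : η < 1 := by
        apply Real.rpow_lt_one_of_one_lt_of_neg hP1
        have h4p : 0 < 1 / (4 * (p : ℝ)) := by positivity
        linarith
      -- the key real inequality : p^(k/p) * η^(2k) ≥ 1/p
      have hbound : ∀ k : ℕ, (1 : ℝ) / p ≤ (p : ℝ) ^ (k / p) * η ^ (2 * k) := by
        intro k
        set Q : ℝ := ((k / p : ℕ) : ℝ) with hQdef
        have hQ0 : 0 ≤ Q := Nat.cast_nonneg _
        have hdiv : (k : ℝ) < (p : ℝ) * Q + p := by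
          have hmod := Nat.div_add_mod k p
          have hlt : k % p < p := Nat.mod_lt _ hp.pos
          have : k < p * (k / p) + p := by
            calc k = p * (k / p) + k % p := hmod.symm
              _ < p * (k / p) + p := Nat.add_lt_add_left hlt _
          rw [hQdef]
          exact_mod_cast this
        have h1 : ((p : ℝ)) ^ (k / p) = (p : ℝ) ^ (Q : ℝ) := by
          rw [hQdef, Real.rpow_natCast]
        have h2 : η ^ (2 * k) = (p : ℝ) ^ ((-(1 / (4 * (p : ℝ)))) * (2 * (k : ℝ))) := by
          rw [hηdef, ← Real.rpow_natCast ((p : ℝ) ^ (-(1 / (4 * (p : ℝ))))) (2 * k),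
            ← Real.rpow_mul hP0.le]
          push_cast
          ring_nf
        have h3 : (1 : ℝ) / p = (p : ℝ) ^ (-1 : ℝ) := by
          rw [Real.rpow_neg_one]
          rw [one_div]
        rw [h1, h2, ← Real.rpow_add hP0, h3]
        apply (Real.rpow_le_rpow_left_iff hP1).mpr
        have key2 : 1 / (4 * (p : ℝ)) * (2 * (k : ℝ)) ≤ Q + 1 := by
          rw [div_mul_eq_mul_div, div_le_iff₀ (by positivity)]
          nlinarith [hdiv, mul_nonneg hP0.le hQ0, hP0]
        linarith
      -- the norm lower bound
      have hlow : ∀ k : ℕ, ‖a 0‖ / p ≤ ‖a (2 * k)‖ * η ^ (2 * k) := by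
        intro k
        have hk := key k
        have hB : ‖(2 : K) ^ k * (k.factorial : K) * (2 * (k : K) - 1)‖ ≤
            ((p : ℝ)⁻¹) ^ (k / p) := by
          rw [norm_mul, norm_mul]
          have b1 : ‖(2 : K) ^ k‖ ≤ 1 := by
            rw [norm_pow]
            apply pow_le_one₀ (norm_nonneg _)
            have := hIntLe 2; push_cast at this; exact this
          have b2 : ‖((k.factorial : ℕ) : K)‖ ≤ ((p : ℝ)⁻¹) ^ (k / p) := hfact k
          have b3 : ‖(2 * (k : K) - 1)‖ ≤ 1 := by
            have h' : (2 * (k : K) - 1) = ((2 * (k : ℤ) - 1 : ℤ) : K) := by push_cast; ring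
            rw [h']
            exact hIntLe _
          calc ‖(2 : K) ^ k‖ * ‖(k.factorial : K)‖ * ‖(2 * (k : K) - 1)‖
              ≤ 1 * (((p : ℝ)⁻¹) ^ (k / p)) * 1 := by
                apply mul_le_mul (mul_le_mul b1 b2 (norm_nonneg _) zero_le_one) b3
                  (norm_nonneg _) (by positivity)
            _ = ((p : ℝ)⁻¹) ^ (k / p) := by ring
        have hnorm : ‖a 0‖ ≤ ‖a (2 * k)‖ * ((p : ℝ)⁻¹) ^ (k / p) := by
          calc ‖a 0‖ = ‖a (2 * k)‖ * ‖(2 : K) ^ k * (k.factorial : K) * (2 * (k : K) - 1)‖ := by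
                rw [hk, norm_mul, norm_neg]
            _ ≤ ‖a (2 * k)‖ * ((p : ℝ)⁻¹) ^ (k / p) :=
                mul_le_mul_of_nonneg_left hB (norm_nonneg _)
        have hpinv : ((p : ℝ)⁻¹) ^ (k / p) = ((p : ℝ) ^ (k / p))⁻¹ := by rw [inv_pow]
        have hppow : (0 : ℝ) < (p : ℝ) ^ (k / p) := by positivity
        have h5 : ‖a 0‖ * (p : ℝ) ^ (k / p) ≤ ‖a (2 * k)‖ := by
          rw [hpinv, ← div_eq_mul_inv] at hnorm
          exact (le_div_iff₀ hppow).mp hnorm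
        calc ‖a 0‖ / p = ‖a 0‖ * ((1 : ℝ) / p) := by ring
          _ ≤ ‖a 0‖ * ((p : ℝ) ^ (k / p) * η ^ (2 * k)) :=
              mul_le_mul_of_nonneg_left (hbound k) (norm_nonneg _)
          _ = (‖a 0‖ * (p : ℝ) ^ (k / p)) * η ^ (2 * k) := by ring
          _ ≤ ‖a (2 * k)‖ * η ^ (2 * k) :=
              mul_le_mul_of_nonneg_right h5 (pow_nonneg hη0.le _)
      -- contradiction with convergence
      have hmono : Tendsto (fun k : ℕ => 2 * k) atTop atTop :=
        StrictMono.tendsto_atTop (fun i j hij => by omega)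
      have htend : Tendsto (fun k : ℕ => ‖a (2 * k)‖ * η ^ (2 * k)) atTop (nhds 0) :=
        (hg η hη0.le hη1).comp hmono
      have hpos : (0 : ℝ) < ‖a 0‖ / p := div_pos (norm_pos_iff.mpr ha0) hP0
      obtain ⟨k, hk⟩ := (htend.eventually_lt_const hpos).exists
      exact absurd (hlow k) (not_le.mpr hk)
    -- now a 0 = 0 : all even coefficients vanish
    have heven : ∀ k : ℕ, a (2 * k) = 0 := by
      intro k
      induction k with
      | zero => simpa using ha0
      | succ k ih =>
        have hr := hrec (2 * k)
        rw [ih, mul_zero] at hr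
        have hne1 : ((2 * k : ℕ) : K) + 1 ≠ 0 := by
          have h' : ((2 * k : ℕ) : K) + 1 = ((2 * k + 1 : ℕ) : K) := by push_cast; ring
          rw [h']
          exact Nat.cast_ne_zero.mpr (by omega)
        have hne2 : ((2 * k : ℕ) : K) + 2 ≠ 0 := by
          have h' : ((2 * k : ℕ) : K) + 2 = ((2 * k + 2 : ℕ) : K) := by push_cast; ring
          rw [h']
          exact Nat.cast_ne_zero.mpr (by omega)
        have h2k : 2 * (k + 1) = 2 * k + 2 := by ring
        rw [h2k]
        exact (mul_eq_zero.mp hr).resolve_left (mul_ne_zero hne1 hne2)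
    -- all odd coefficients ≥ 3 vanish
    have hodd : ∀ k : ℕ, a (2 * k + 3) = 0 := by
      intro k
      induction k with
      | zero =>
        have hr := hrec 1
        have hz : ((1 : ℕ) : K) - 1 = 0 := by push_cast; ring
        rw [hz, zero_mul] at hr
        have hne1 : ((1 : ℕ) : K) + 1 ≠ 0 := by
          have h' : ((1 : ℕ) : K) + 1 = ((2 : ℕ) : K) := by push_cast; ring
          rw [h']
          exact Nat.cast_ne_zero.mpr (by omega)
        have hne2 : ((1 : ℕ) : K) + 2 ≠ 0 := by
          have h' : ((1 : ℕ) : K) + 2 = ((3 : ℕ) : K) := by push_cast; ring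
          rw [h']
          exact Nat.cast_ne_zero.mpr (by omega)
        have := (mul_eq_zero.mp hr).resolve_left (mul_ne_zero hne1 hne2)
        simpa using this
      | succ k ih =>
        have hr := hrec (2 * k + 3)
        rw [ih, mul_zero] at hr
        have hne1 : ((2 * k + 3 : ℕ) : K) + 1 ≠ 0 := by
          have h' : ((2 * k + 3 : ℕ) : K) + 1 = ((2 * k + 4 : ℕ) : K) := by push_cast; ring
          rw [h']
          exact Nat.cast_ne_zero.mpr (by omega)
        have hne2 : ((2 * k + 3 : ℕ) : K) + 2 ≠ 0 := by
          have h' : ((2 * k + 3 : ℕ) : K) + 2 = ((2 * k + 5 : ℕ) : K) := by push_cast; ring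
          rw [h']
          exact Nat.cast_ne_zero.mpr (by omega)
        have h2k : 2 * (k + 1) + 3 = 2 * k + 3 + 2 := by ring
        rw [h2k]
        exact (mul_eq_zero.mp hr).resolve_left (mul_ne_zero hne1 hne2)
    have hzero : ∀ m : ℕ, m ≠ 1 → a m = 0 := by
      intro m hm
      rcases Nat.even_or_odd m with ⟨k, hk⟩ | ⟨k, hk⟩
      · have h' : m = 2 * k := by omega
        rw [h']
        exact heven k
      · have hk1 : k ≠ 0 := by omega
        obtain ⟨j, rfl⟩ : ∃ j, k = j + 1 := ⟨k - 1, by omega⟩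
        have h' : m = 2 * j + 3 := by omega
        rw [h']
        exact hodd j
    have hgeq : g = PowerSeries.C (R := K) (a 1) * X := by
      ext n
      rw [coeff_C_mul, coeff_X]
      by_cases hn : n = 1
      · subst hn
        simp [ha]
      · rw [if_neg hn, mul_zero]
        exact hzero n hn
    refine ⟨a 1, hgeq, ?_⟩
    rw [← h1']
    ext n
    rw [coeff_derivative, PowerSeries.coeff_C]
    by_cases hn : n = 0
    · subst hn
      simp [ha]
    · rw [if_neg hn]
      have h' : a (n + 1) = 0 := hzero (n + 1) (by omega)
      rw [show (PowerSeries.coeff (R := K) (n + 1)) g = a (n + 1) from rfl, h', zero_mul]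
  · rintro ⟨d, rfl, rfl⟩
    have hder : (PowerSeries.derivative K) (PowerSeries.C (R := K) d * X) = PowerSeries.C (R := K) d := by
      ext n
      rw [coeff_derivative, coeff_C_mul, coeff_X, PowerSeries.coeff_C]
      rcases n with _ | n <;> simp
    constructor
    · rw [hder, sub_self]
    · rw [derivative_C]
      ring
end

section
/- Let p ≠ 2 and K a complete discretely valued field of mixed characteristic (0,p). Let M∨ be the differential module over K[[t]]₀ with basis e₁∨, e₂∨ and D(e₁∨) = e₂∨, D(e₂∨) = -e₁∨ + t·e₂∨ (the dual of the module in the previous item, corresponding to the operator d²/dt² - t·d/dt). Then M∨ ⊗ K{t} has no nonzero horizontal sections. -/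
open PowerSeries Filter


open scoped Nat in
private lemma aux_vpow (p : ℕ) (hp : p.Prime) (m : ℕ) :
    padicValNat p ((p ^ m)!) = ∑ i ∈ Finset.range m, p ^ i := by
  haveI : Fact p.Prime := ⟨hp⟩
  induction m with
  | zero => simp
  | succ m ih =>
    rw [pow_succ, mul_comm, padicValNat_factorial_mul, ih, Finset.sum_range_succ]

open scoped Nat in
private lemma aux_dfac (p k : ℕ) (hp : p.Prime) (hp2 : p ≠ 2) :
    padicValNat p ((2*k+1)!) = padicValNat p ((2*k+1)‼) + padicValNat p (k !) := by
  haveI : Fact p.Prime := ⟨hp⟩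
  have h1 : (2*k+1)! = (2*k+1)‼ * (2^k * k !) := by
    rw [Nat.factorial_eq_mul_doubleFactorial (2*k), Nat.doubleFactorial_two_mul]
  have hp2k : padicValNat p (2^k) = 0 := padicValNat.eq_zero_of_not_dvd (by
    intro hd
    exact hp2 ((Nat.prime_dvd_prime_iff_eq hp Nat.prime_two).mp (hp.dvd_of_dvd_pow hd)))
  rw [h1, padicValNat.mul (Nat.doubleFactorial_pos _).ne' (by positivity),
      padicValNat.mul (by positivity) (Nat.factorial_pos _).ne', hp2k, zero_add]

/-- Let `p ≠ 2` be prime and `K` a complete discretely valued field of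
mixed characteristic `(0,p)`. Let `M∨` be the differential module over `K[[t]]₀` with basis
`e₁∨, e₂∨`, `D(e₁∨) = e₂∨`, `D(e₂∨) = -e₁∨ + t·e₂∨` (corresponding to `d²/dt² - t·d/dt`),
so on coordinates `D(g,h) = (g' - h, g + h' + t·h)`. Then `M∨ ⊗ K{t}` has no nonzero
horizontal sections: if `g, h` converge on the open unit disc and `D(g,h) = 0`,
then `g = h = 0`. -/
theorem no_horizontal_sections_of_M_dual (p : ℕ) (hp : p.Prime) (hp2 : p ≠ 2)
    (K : Type*) [NormedField K] [CompleteSpace K]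
    (hK : ∀ q : ℚ, ‖(q : K)‖ = (padicNorm p q : ℝ))
    (hdisc : ∃ π : K, 0 < ‖π‖ ∧ ‖π‖ < 1 ∧ ∀ x : K, x ≠ 0 → ∃ n : ℤ, ‖x‖ = ‖π‖ ^ n) :
    let Conv : PowerSeries K → Prop := fun f => ∀ η : ℝ, 0 ≤ η → η < 1 →
      Tendsto (fun i : ℕ => ‖PowerSeries.coeff (R := K) i f‖ * η ^ i) atTop (nhds 0)
    ∀ g h : PowerSeries K, Conv g → Conv h →
      (PowerSeries.derivative K g - h = 0 ∧
        g + PowerSeries.derivative K h + PowerSeries.X * h = 0) →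
      g = 0 ∧ h = 0 := by
  haveI hfact : Fact p.Prime := ⟨hp⟩
  intro Conv g h hg hh hD
  obtain ⟨hD1, hD2⟩ := hD
  have hdg : h = PowerSeries.derivative K g := (sub_eq_zero.mp hD1).symm
  subst hdg
  -- basic real facts
  have hw0 : (0:ℝ) < p := by exact_mod_cast hp.pos
  have hw1 : (1:ℝ) < p := by exact_mod_cast hp.one_lt
  have hwpos : (0:ℝ) < (p:ℝ) - 1 := by linarith
  have hwne : ((p:ℝ) - 1) ≠ 0 := ne_of_gt hwpos
  -- norms of rationals / naturals
  have hnormN : ∀ n : ℕ, ‖(n : K)‖ = (padicNorm p n : ℝ) := by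
    intro n
    simpa using hK (n : ℚ)
  have hval : ∀ n : ℕ, n ≠ 0 → ‖(n : K)‖ = (p : ℝ) ^ (-(padicValNat p n : ℝ)) := by
    intro n hn
    have h1 : padicNorm p (n : ℚ) = (p:ℚ) ^ (-(padicValNat p n : ℤ)) := by
      rw [padicNorm.eq_zpow_of_nonzero (show (n:ℚ) ≠ 0 by exact_mod_cast hn),
        padicValRat.of_nat]
    rw [hnormN, h1, Rat.cast_zpow, Rat.cast_natCast, ← Real.rpow_intCast]
    congr 1
    simp only [Int.cast_neg, Int.cast_natCast]
  have hnz : ∀ n : ℕ, n ≠ 0 → (n : K) ≠ 0 := by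
    intro n hn h0
    have h1 := hval n hn
    rw [h0, norm_zero] at h1
    exact absurd h1.symm (ne_of_gt (Real.rpow_pos_of_pos hw0 _))
  -- the recurrence
  have hc : ∀ n : ℕ, coeff (R := K) n g + coeff (R := K) n (PowerSeries.derivative K (PowerSeries.derivative K g))
      + coeff (R := K) n (PowerSeries.X * PowerSeries.derivative K g) = 0 := by
    intro n
    have h0 := congrArg (coeff (R := K) n) hD2
    simpa [map_add] using h0
  have hrec : ∀ n : ℕ, ((n : K) + 2) * coeff (R := K) (n+2) g = - coeff (R := K) n g := by
    intro n
    rcases n with _ | m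
    · have h0 := hc 0
      rw [coeff_zero_X_mul, coeff_derivative, coeff_derivative] at h0
      push_cast at h0 ⊢
      linear_combination h0
    · have h0 := hc (m+1)
      rw [coeff_succ_X_mul, coeff_derivative, coeff_derivative, coeff_derivative] at h0
      push_cast at h0 ⊢
      have key : ((m:K) + 2) * (coeff (R := K) (m+1) g + ((m:K) + 3) * coeff (R := K) (m+3) g) = 0 := by
        linear_combination h0
      have h2 := (mul_eq_zero.mp key).resolve_left (by
        have := hnz (m+2) (by omega)
        push_cast at this
        exact this)
      linear_combination h2
  have hrecn : ∀ n : ℕ, ‖((n+2 : ℕ) : K)‖ * ‖coeff (R := K) (n+2) g‖ = ‖coeff (R := K) n g‖ := by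
    intro n
    have h0 := congrArg norm (hrec n)
    rw [norm_mul, norm_neg] at h0
    push_cast
    exact h0
  -- norm of 2 is 1
  have h2K : ‖((2:ℕ) : K)‖ = 1 := by
    rw [hval 2 (by norm_num)]
    have : padicValNat p 2 = 0 := padicValNat.eq_zero_of_not_dvd (by
      intro hd
      exact hp2 ((Nat.prime_dvd_prime_iff_eq hp Nat.prime_two).mp hd))
    rw [this]
    simp
  have hnorm2mul : ∀ j : ℕ, ‖((2*j : ℕ) : K)‖ = ‖(j : K)‖ := by
    intro j
    have e : ((2*j : ℕ) : K) = ((2:ℕ) : K) * (j : K) := by push_cast; ring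
    rw [e, norm_mul, h2K, one_mul]
  -- even chain
  have hE : ∀ k : ℕ, ‖((Nat.factorial k : ℕ) : K)‖ * ‖coeff (R := K) (2*k) g‖ = ‖coeff (R := K) 0 g‖ := by
    intro k
    induction k with
    | zero => simp [Nat.factorial]
    | succ k ih =>
      have hr := hrecn (2*k)
      have e1 : (2*k+2) = 2*(k+1) := by ring
      rw [e1, hnorm2mul] at hr
      have e2 : ((Nat.factorial (k+1) : ℕ) : K)
          = ((k+1 : ℕ) : K) * ((Nat.factorial k : ℕ) : K) := by
        rw [Nat.factorial_succ]; push_cast; ring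
      rw [e2, norm_mul, show 2*(k+1) = 2*k+2 from by ring]
      calc ‖((k+1 : ℕ) : K)‖ * ‖((Nat.factorial k : ℕ) : K)‖ * ‖coeff (R := K) (2*k+2) g‖
          = ‖((Nat.factorial k : ℕ) : K)‖ * (‖((k+1 : ℕ) : K)‖ * ‖coeff (R := K) (2*k+2) g‖) := by
            ring
        _ = ‖((Nat.factorial k : ℕ) : K)‖ * ‖coeff (R := K) (2*k) g‖ := by
            rw [show 2*(k+1) = 2*k+2 from by ring] at hr
            rw [hr]
        _ = ‖coeff (R := K) 0 g‖ := ih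
  -- odd chain
  have hF : ∀ k : ℕ, ‖((Nat.doubleFactorial (2*k+1) : ℕ) : K)‖ * ‖coeff (R := K) (2*k+1) g‖
      = ‖coeff (R := K) 1 g‖ := by
    intro k
    induction k with
    | zero => simp [Nat.doubleFactorial]
    | succ k ih =>
      have hr := hrecn (2*k+1)
      have e1 : 2*(k+1)+1 = (2*k+1)+2 := by ring
      rw [e1, Nat.doubleFactorial_add_two]
      have e3 : (((2*k+1+2) * (Nat.doubleFactorial (2*k+1)) : ℕ) : K)
          = (((2*k+1)+2 : ℕ) : K) * ((Nat.doubleFactorial (2*k+1) : ℕ) : K) := by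
        push_cast; ring
      rw [e3, norm_mul]
      calc ‖(((2*k+1)+2 : ℕ) : K)‖ * ‖((Nat.doubleFactorial (2*k+1) : ℕ) : K)‖ *
            ‖coeff (R := K) (2*k+1+2) g‖
          = ‖((Nat.doubleFactorial (2*k+1) : ℕ) : K)‖ *
            (‖(((2*k+1)+2 : ℕ) : K)‖ * ‖coeff (R := K) (2*k+1+2) g‖) := by ring
        _ = ‖((Nat.doubleFactorial (2*k+1) : ℕ) : K)‖ * ‖coeff (R := K) (2*k+1) g‖ := by rw [hr]
        _ = ‖coeff (R := K) 1 g‖ := ih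
  -- the radius η
  set η : ℝ := (p:ℝ) ^ (-(1 / (2 * ((p:ℝ) - 1)))) with hηdef
  have hη0 : 0 < η := Real.rpow_pos_of_pos hw0 _
  have hη1 : η < 1 := Real.rpow_lt_one_of_one_lt_of_neg hw1 (by
    have : 0 < 1 / (2 * ((p:ℝ) - 1)) := by positivity
    linarith)
  have hηpow : ∀ n : ℕ, η ^ n = (p:ℝ) ^ (-((n:ℝ) / (2 * ((p:ℝ) - 1)))) := by
    intro n
    rw [hηdef, ← Real.rpow_natCast ((p:ℝ) ^ (-(1 / (2 * ((p:ℝ) - 1))))) n,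
      ← Real.rpow_mul hw0.le]
    congr 1
    ring
  have hgeom : ∀ m : ℕ, ((padicValNat p (Nat.factorial (p^m)) : ℝ))
      = ((p:ℝ)^m - 1)/((p:ℝ)-1) := by
    intro m
    rw [aux_vpow p hp m]
    push_cast
    rw [geom_sum_eq (by exact_mod_cast hw1.ne') m]
  have hpm : Tendsto (fun m : ℕ => p ^ m) atTop atTop :=
    tendsto_pow_atTop_atTop_of_one_lt hp.one_lt
  have hT := hg η hη0.le hη1
  -- a0 = 0
  have ha0 : coeff (R := K) 0 g = 0 := by
    by_contra ha0
    have key : ∀ m : ℕ, ‖coeff (R := K) (2 * p ^ m) g‖ * η ^ (2 * p ^ m)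
        = ‖coeff (R := K) 0 g‖ * (p:ℝ) ^ (-(1/((p:ℝ)-1))) := by
      intro m
      have hE1 := hE (p ^ m)
      rw [hval _ (Nat.factorial_ne_zero _)] at hE1
      have h2 : ‖coeff (R := K) (2*p^m) g‖
          = (p:ℝ) ^ ((padicValNat p (Nat.factorial (p^m)) : ℝ)) * ‖coeff (R := K) 0 g‖ := by
        rw [← hE1, ← mul_assoc, ← Real.rpow_add hw0, add_neg_cancel, Real.rpow_zero, one_mul]
      have hexp : ((p:ℝ)^m - 1)/((p:ℝ)-1) + -(((2*p^m : ℕ):ℝ) / (2*((p:ℝ)-1)))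
          = -(1/((p:ℝ)-1)) := by
        push_cast
        field_simp
        ring
      rw [h2, hηpow, mul_comm ((p:ℝ) ^ ((padicValNat p (Nat.factorial (p^m)) : ℝ))) _,
        mul_assoc, ← Real.rpow_add hw0, hgeom, hexp]
    have hsub : Tendsto (fun m : ℕ => 2 * p ^ m) atTop atTop :=
      tendsto_atTop_mono (fun m => by
        have : 0 < p ^ m := pow_pos hp.pos m
        omega) hpm
    have hT2 := hT.comp hsub
    have hcpos : 0 < ‖coeff (R := K) 0 g‖ * (p:ℝ) ^ (-(1/((p:ℝ)-1))) :=
      mul_pos (norm_pos_iff.mpr ha0) (Real.rpow_pos_of_pos hw0 _)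
    obtain ⟨m, hm⟩ := (hT2.eventually_lt_const hcpos).exists
    simp only [Function.comp_apply] at hm
    rw [key m] at hm
    exact absurd hm (lt_irrefl _)
  -- a1 = 0
  have ha1 : coeff (R := K) 1 g = 0 := by
    by_contra ha1
    have hT2 := hT.comp hpm
    have hcpos : 0 < ‖coeff (R := K) 1 g‖ * η := mul_pos (norm_pos_iff.mpr ha1) hη0
    obtain ⟨m, hm⟩ := (hT2.eventually_lt_const hcpos).exists
    simp only [Function.comp_apply] at hm
    obtain ⟨k, hk⟩ := (hp.odd_of_ne_two hp2).pow (n := m)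
    rw [hk] at hm
    -- lower bound the term
    have hF1 := hF k
    rw [hval _ (Nat.doubleFactorial_pos _).ne'] at hF1
    set V : ℕ := padicValNat p (Nat.doubleFactorial (2*k+1)) with hV
    have h2 : ‖coeff (R := K) (2*k+1) g‖ = (p:ℝ) ^ ((V:ℝ)) * ‖coeff (R := K) 1 g‖ := by
      rw [← hF1, ← mul_assoc, ← Real.rpow_add hw0, add_neg_cancel, Real.rpow_zero, one_mul]
    -- valuation identities
    have hvm : padicValNat p (Nat.factorial (p^m)) = V + padicValNat p (Nat.factorial k) := by
      rw [hV, ← aux_dfac p k hp hp2, hk]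
    have hkR : ((p:ℝ)^m) = 2*(k:ℝ)+1 := by exact_mod_cast congrArg (Nat.cast (R := ℝ)) hk
    have hvk : ((padicValNat p (Nat.factorial k) : ℝ)) ≤ (k:ℝ)/((p:ℝ)-1) := by
      have hb : (p - 1) * padicValNat p (Nat.factorial k) ≤ k := by
        rw [sub_one_mul_padicValNat_factorial]
        exact Nat.sub_le _ _
      have hb2 : ((p:ℝ) - 1) * (padicValNat p (Nat.factorial k) : ℝ) ≤ (k:ℝ) := by
        have := (Nat.cast_le (α := ℝ)).mpr hb
        push_cast [Nat.cast_sub hp.one_lt.le] at this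
        linarith
      rw [le_div_iff₀ hwpos]
      linarith
    have hVR : (k:ℝ)/((p:ℝ)-1) ≤ (V:ℝ) := by
      have h3 : ((padicValNat p (Nat.factorial (p^m)) : ℝ))
          = (V:ℝ) + ((padicValNat p (Nat.factorial k) : ℝ)) := by exact_mod_cast hvm
      have h4 := hgeom m
      rw [h3, hkR] at h4
      have h5 : (V:ℝ) = (2*(k:ℝ)+1-1)/((p:ℝ)-1) - ((padicValNat p (Nat.factorial k) : ℝ)) := by
        linarith
      rw [h5]
      have : (2*(k:ℝ)+1-1)/((p:ℝ)-1) = 2*(k:ℝ)/((p:ℝ)-1) := by ring_nf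
      rw [this]
      have h6 : 2*(k:ℝ)/((p:ℝ)-1) - (k:ℝ)/((p:ℝ)-1) = (k:ℝ)/((p:ℝ)-1) := by ring
      linarith [hvk]
    -- compare
    have hterm : ‖coeff (R := K) 1 g‖ * η ≤ ‖coeff (R := K) (2*k+1) g‖ * η ^ (2*k+1) := by
      rw [h2, hηpow, mul_comm ((p:ℝ) ^ ((V:ℝ))) _, mul_assoc, ← Real.rpow_add hw0, hηdef]
      have hexp : (-(1 / (2 * ((p:ℝ) - 1)))) ≤ (V:ℝ) + (-(((2*k+1 : ℕ):ℝ) / (2 * ((p:ℝ) - 1)))) := by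
        push_cast
        have h7 : (k:ℝ)/((p:ℝ)-1) - (2*(k:ℝ)+1) / (2 * ((p:ℝ) - 1))
            = -(1 / (2 * ((p:ℝ) - 1))) := by field_simp; ring
        linarith [hVR]
      exact mul_le_mul_of_nonneg_left (Real.rpow_le_rpow_of_exponent_le hw1.le hexp)
        (norm_nonneg _)
    exact absurd (lt_of_le_of_lt hterm hm) (lt_irrefl _)
  -- all coefficients vanish
  have hzero : ∀ n : ℕ, coeff (R := K) n g = 0 := by
    intro n
    induction n using Nat.twoStepInduction with
    | zero => exact ha0
    | one => exact ha1
    | more n ih _ =>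
      have hr := hrec n
      rw [ih, neg_zero] at hr
      have hne : ((n:K) + 2) ≠ 0 := by
        have := hnz (n+2) (by omega)
        push_cast at this
        exact this
      exact (mul_eq_zero.mp hr).resolve_left hne
  have hgz : g = 0 := by
    ext n
    rw [map_zero]
    exact hzero n
  exact ⟨hgz, by rw [hgz, map_zero]⟩
end

section
/- Define φ: ℝ≥0 → ℝ≥0 by φ(s) = min{s^p, s/p} (so φ(s) = s/p for s ≤ ω and φ(s) = s^p for s ≥ ω, where ω = p^{-1/(p-1)}). Then φ is strictly increasing on (0,∞), and for finite multisets S, S' of positive reals, if φ(S) = φ(S') then S = S', where φ(S) is the multiset union over s ∈ S of {s^p together with p-1 copies of ω^p} if s > ω, and {p copies of s/p} if s ≤ ω. -/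
/-- Let `p` be a prime, `ω = p^(-1/(p-1)) ∈ (0,1)`, and
`φ(s) = min(s^p, s/p)` (so `φ(s) = s/p` for `s ≤ ω` and `φ(s) = s^p` for `s ≥ ω`).
Then `φ` is strictly increasing on `(0,∞)`, and the induced map on finite multisets of
positive reals, sending `s` to `{s^p}` together with `p-1` copies of `ω^p` if `s > ω`
and to `p` copies of `s/p` if `s ≤ ω`, is injective. -/
theorem phi_strictMono_and_multiset_injective (p : ℕ) (hp : p.Prime) :
    let ω : ℝ := (p : ℝ) ^ (-(1 : ℝ) / (p - 1))
    let φ : ℝ → ℝ := fun s => min (s ^ p) (s / p)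
    let Φ : Multiset ℝ → Multiset ℝ := fun S =>
      S.bind fun s =>
        if ω < s then s ^ p ::ₘ Multiset.replicate (p - 1) (ω ^ p)
        else Multiset.replicate p (s / p)
    StrictMonoOn φ (Set.Ioi (0 : ℝ)) ∧
    ∀ S S' : Multiset ℝ, (∀ s ∈ S, 0 < s) → (∀ s ∈ S', 0 < s) →
      Φ S = Φ S' → S = S' := by
  intro ω φ Φ
  have hp1 : (1 : ℝ) < p := by exact_mod_cast hp.one_lt
  have hppos : (0 : ℝ) < p := by linarith
  have hpne : (p : ℝ) ≠ 0 := ne_of_gt hppos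
  have hωpos : 0 < ω := Real.rpow_pos_of_pos hppos _
  have hωp : ω ^ p = ω / p := by
    have h1 : ((p : ℝ) - 1) ≠ 0 := by linarith
    show ((p : ℝ) ^ (-(1 : ℝ) / (p - 1))) ^ p = ((p : ℝ) ^ (-(1 : ℝ) / (p - 1))) / p
    rw [← Real.rpow_natCast ((p : ℝ) ^ (-(1 : ℝ) / ((p : ℝ) - 1))) p,
      ← Real.rpow_mul hppos.le, eq_div_iff hpne, ← Real.rpow_add_one hpne]
    congr 1
    field_simp
    ring
  constructor
  · intro x hx y hy hxy
    have h1 : x ^ p < y ^ p := pow_lt_pow_left₀ hxy (le_of_lt hx) hp.ne_zero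
    have h2 : x / p < y / p := by gcongr
    exact min_lt_min h1 h2
  · intro S S' hS hS' hΦ
    classical
    -- the "big" part is recovered by filtering above ω^p
    have hbig : ∀ T : Multiset ℝ, (∀ s ∈ T, 0 < s) →
        (Φ T).filter (fun x => ω ^ p < x)
          = (T.filter (fun s => ω < s)).map (fun s => s ^ p) := by
      intro T
      induction T using Multiset.induction_on with
      | empty => intro _; simp [Φ]
      | cons a T ih =>
        intro hT
        have ha : 0 < a := hT a (Multiset.mem_cons_self a T)
        have ihT := ih (fun s hs => hT s (Multiset.mem_cons_of_mem hs))
        have hc : Φ (a ::ₘ T) = (if ω < a then a ^ p ::ₘ Multiset.replicate (p - 1) (ω ^ p)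
            else Multiset.replicate p (a / p)) + Φ T := Multiset.cons_bind _ _ _
        rw [hc, Multiset.filter_add, ihT]
        by_cases h : ω < a
        · have hz : Multiset.filter (fun x => ω ^ p < x)
              (Multiset.replicate (p - 1) (ω ^ p)) = 0 :=
            Multiset.filter_eq_nil.2 (fun b hb => by
              rw [Multiset.eq_of_mem_replicate hb]; simp)
          rw [if_pos h, Multiset.filter_cons_of_pos _ (by
            simpa using pow_lt_pow_left₀ h hωpos.le hp.ne_zero : ω ^ p < a ^ p), hz,
            Multiset.filter_cons_of_pos _ h, Multiset.map_cons, Multiset.cons_add, zero_add]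
        · rw [if_neg h, Multiset.filter_cons_of_neg _ h]
          have hle : a / p ≤ ω ^ p := by
            rw [hωp]
            gcongr
            exact le_of_not_gt h
          rw [Multiset.filter_eq_nil.2, zero_add]
          intro b hb
          rw [Multiset.eq_of_mem_replicate hb]
          simpa using hle
    -- recovering a multiset of elements > ω from its p-th powers
    have hrec : ∀ T : Multiset ℝ, (∀ s ∈ T, 0 < s) →
        Multiset.map (fun x => x ^ ((p : ℝ)⁻¹)) (T.map fun s => s ^ p) = T := by
      intro T hT
      rw [Multiset.map_map]
      have : ∀ s ∈ T, ((fun x => x ^ ((p : ℝ)⁻¹)) ∘ fun s => s ^ p) s = id s := by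
        intro s hs
        have hs0 := hT s hs
        simp only [Function.comp_apply, id]
        rw [← Real.rpow_natCast s p, ← Real.rpow_mul hs0.le,
          mul_inv_cancel₀ hpne, Real.rpow_one]
      rw [Multiset.map_congr rfl this, Multiset.map_id]
    have hA : S.filter (fun s => ω < s) = S'.filter (fun s => ω < s) := by
      have h1 := hbig S hS
      have h2 := hbig S' hS'
      rw [hΦ, h2] at h1
      have h3 := congrArg (Multiset.map (fun x => x ^ ((p : ℝ)⁻¹))) h1
      rw [hrec _ (fun s hs => lt_trans hωpos (Multiset.of_mem_filter hs)),
        hrec _ (fun s hs => lt_trans hωpos (Multiset.of_mem_filter hs))] at h3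
      exact h3.symm
    -- split Φ into big and small parts
    have hsplit : ∀ T : Multiset ℝ,
        Φ T = Φ (T.filter (fun s => ω < s)) + Φ (T.filter (fun s => ¬ ω < s)) := by
      intro T
      show Φ T = _
      conv_lhs => rw [← Multiset.filter_add_not (fun s => ω < s) T]
      exact Multiset.add_bind _ _ _
    have hsmall : Φ (S.filter (fun s => ¬ ω < s)) = Φ (S'.filter (fun s => ¬ ω < s)) := by
      have := hΦ
      rw [hsplit S, hsplit S', hA] at this
      exact add_left_cancel this
    -- count computation for the small part
    have hcount : ∀ (T : Multiset ℝ) (a : ℝ),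
        Multiset.count a (T.bind fun s => Multiset.replicate p (s / p))
          = p * Multiset.count (a * p) T := by
      intro T a
      induction T using Multiset.induction_on with
      | empty => simp
      | cons s T ih =>
        rw [Multiset.cons_bind, Multiset.count_add, ih, Multiset.count_cons,
          Multiset.count_replicate]
        have hiff : (s / p = a) ↔ (a * p = s) := by
          rw [div_eq_iff hpne, eq_comm]
        by_cases h : a * p = s
        · rw [if_pos (hiff.2 h), if_pos h]
          ring
        · rw [if_neg (fun hh => h (hiff.1 hh)), if_neg h]
          ring
    have hB : S.filter (fun s => ¬ ω < s) = S'.filter (fun s => ¬ ω < s) := by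
      have heq : (S.filter (fun s => ¬ ω < s)).bind (fun s => Multiset.replicate p (s / p))
          = (S'.filter (fun s => ¬ ω < s)).bind (fun s => Multiset.replicate p (s / p)) := by
        have e1 : ∀ T : Multiset ℝ,
            Φ (T.filter (fun s => ¬ ω < s))
              = (T.filter (fun s => ¬ ω < s)).bind (fun s => Multiset.replicate p (s / p)) := by
          intro T
          apply Multiset.bind_congr
          intro s hs
          rw [if_neg (Multiset.mem_filter.1 hs).2]
        rw [← e1, ← e1]
        exact hsmall
      ext b
      have h := congrArg (Multiset.count (b / p)) heq
      rw [hcount, hcount, div_mul_cancel₀ b hpne] at h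
      exact Nat.eq_of_mul_eq_mul_left hp.pos h
    calc S = S.filter (fun s => ω < s) + S.filter (fun s => ¬ ω < s) :=
        (Multiset.filter_add_not _ S).symm
      _ = S'.filter (fun s => ω < s) + S'.filter (fun s => ¬ ω < s) := by rw [hA, hB]
      _ = S' := Multiset.filter_add_not _ S'
end
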